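/- arXiv:1610.06988 — 4 statements merged into one kernel-verified Lean document; each statement's English description precedes it below -/
import Mathlib

section
/- Let g > 0 and let k ≥ 1 be an integer. For every β < β_k there exists a GP solution φ on [0,L] with parameter β that is not identically zero and has exactly k − 1 interior zeros (i.e., exactly k − 1 points x ∈ (0,L) with φ(x) = 0); moreover −φ is also such a solution, distinct from φ. (Global existence of the branch of quantum states bifurcating from (0, β_k), with nodal structure inherited from the k-th Dirichlet eigenfunction.) -/
open Set MeasureTheory intervalIntegral Filter Topology

/-- `φ` is a GP solution on `[a,b]` with parameter `β`:
`φ` is continuous on `[a,b]`, twice continuously differentiable on `(a,b)`,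
satisfies `-(ℏ²/(4m))·φ'' + (β - ℏλ)·φ + g·φ³ = 0` on `(a,b)`,
and `φ a = φ b = 0`. -/
def IsGPSolution (ℏ m lam g a b β : ℝ) (φ : ℝ → ℝ) : Prop :=
  ContinuousOn φ (Set.Icc a b) ∧
  ContDiffOn ℝ 2 φ (Set.Ioo a b) ∧
  (∀ x ∈ Set.Ioo a b,
    -(ℏ ^ 2 / (4 * m)) * deriv (deriv φ) x + (β - ℏ * lam) * φ x + g * (φ x) ^ 3 = 0) ∧
  φ a = 0 ∧ φ b = 0

/-- The quantum critical points `β_k = ℏλ - (ℏ²/(4m))·(kπ/L)²`. -/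
noncomputable def betaCrit (ℏ m lam L : ℝ) (k : ℕ) : ℝ :=
  ℏ * lam - (ℏ ^ 2 / (4 * m)) * ((k : ℝ) * Real.pi / L) ^ 2

section EllipticAux

noncomputable def ellg (p t : ℝ) : ℝ := 1 / Real.sqrt (1 - p^2 * Real.sin t ^ 2)
noncomputable def ellF (p θ : ℝ) : ℝ := ∫ t in (0:ℝ)..θ, ellg p t
noncomputable def ellK (p : ℝ) : ℝ := ellF p (Real.pi/2)

variable {p : ℝ}

lemma ell_pos (hp : p^2 < 1) (t : ℝ) : 0 < 1 - p^2 * Real.sin t ^ 2 := by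
  nlinarith [Real.sin_sq_le_one t, sq_nonneg p, sq_nonneg (Real.sin t), sq_nonneg (p * Real.sin t)]

lemma ellg_pos (hp : p^2 < 1) (t : ℝ) : 0 < ellg p t := by
  have := ell_pos hp (p := p) t
  simp only [ellg]
  positivity

lemma ellg_ge_one (hp : p^2 < 1) (t : ℝ) : 1 ≤ ellg p t := by
  have h1 := ell_pos hp (p := p) t
  have h2 : 1 - p^2 * Real.sin t ^ 2 ≤ 1 := by nlinarith [sq_nonneg (p * Real.sin t)]
  have : Real.sqrt (1 - p^2 * Real.sin t ^ 2) ≤ 1 := by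
    rw [show (1:ℝ) = Real.sqrt 1 by simp]
    exact Real.sqrt_le_sqrt (by simpa using h2)
  rw [ellg, le_div_iff₀ (Real.sqrt_pos.2 h1), one_mul]
  exact this

lemma ellg_le (hp : p^2 < 1) (t : ℝ) : ellg p t ≤ 1 / Real.sqrt (1 - p^2) := by
  have h1 := ell_pos hp (p := p) t
  have h2 : 1 - p^2 ≤ 1 - p^2 * Real.sin t ^ 2 := by nlinarith [Real.sin_sq_le_one t, sq_nonneg p]
  have hp1 : (0:ℝ) < 1 - p^2 := by linarith
  apply one_div_le_one_div_of_le (Real.sqrt_pos.2 hp1) (Real.sqrt_le_sqrt h2)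

lemma ellg_cont (hp : p^2 < 1) : Continuous (ellg p) := by
  apply Continuous.div continuous_const
  · exact (Real.continuous_sqrt.comp (by continuity))
  · intro t
    exact (Real.sqrt_pos.2 (ell_pos hp t)).ne'

lemma ellg_intble (hp : p^2 < 1) (a b : ℝ) : IntervalIntegrable (ellg p) volume a b :=
  (ellg_cont hp).intervalIntegrable a b

lemma ellF_hasDeriv (hp : p^2 < 1) (θ : ℝ) : HasDerivAt (ellF p) (ellg p θ) θ :=
  integral_hasDerivAt_right (ellg_intble hp 0 θ) ((ellg_cont hp).stronglyMeasurableAtFilter _ _)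
    (ellg_cont hp).continuousAt

lemma ellF_zero : ellF p 0 = 0 := by simp [ellF]

lemma ellF_mono (hp : p^2 < 1) : StrictMono (ellF p) :=
  strictMono_of_deriv_pos (fun θ => by
    rw [(ellF_hasDeriv hp θ).deriv]; exact ellg_pos hp θ)

lemma ellF_cont (hp : p^2 < 1) : Continuous (ellF p) := continuous_iff_continuousAt.2 fun θ => (ellF_hasDeriv hp θ).continuousAt

lemma ellF_ge (hp : p^2 < 1) {θ : ℝ} (hθ : 0 ≤ θ) : θ ≤ ellF p θ := by
  calc θ = ∫ t in (0:ℝ)..θ, 1 := by simp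
  _ ≤ ellF p θ := by
      apply intervalIntegral.integral_mono_on hθ (by simp) (ellg_intble hp 0 θ)
      exact fun t _ => ellg_ge_one hp t

lemma ellF_neg (hp : p^2 < 1) (θ : ℝ) : ellF p (-θ) = - ellF p θ := by
  have heven : ∀ t, ellg p (-t) = ellg p t := fun t => by simp [ellg]
  have h1 : (∫ t in (-θ)..(0:ℝ), ellg p t) = ∫ t in (0:ℝ)..θ, ellg p t := by
    rw [show (-θ) = -θ from rfl, show (0:ℝ) = -(0:ℝ) by ring]
    rw [← intervalIntegral.integral_comp_neg (a := 0) (b := θ) (f := ellg p)]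
    simp [heven]
  have h2 : ellF p (-θ) = -(∫ t in (-θ)..(0:ℝ), ellg p t) := by
    rw [ellF, intervalIntegral.integral_symm]
  rw [h2, h1]; rfl

lemma ellF_le_neg (hp : p^2 < 1) {θ : ℝ} (hθ : θ ≤ 0) : ellF p θ ≤ θ := by
  have h := ellF_ge hp (θ := -θ) (by linarith)
  rw [ellF_neg hp] at h
  linarith

lemma ellF_surj (hp : p^2 < 1) : Function.Surjective (ellF p) := by
  intro y
  rcases le_total 0 y with hy | hy
  · have := intermediate_value_Icc hy ((ellF_cont hp).continuousOn)
    have hmem : y ∈ Icc (ellF p 0) (ellF p y) := by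
      rw [ellF_zero]; exact ⟨hy, ellF_ge hp hy⟩
    obtain ⟨x, _, hx⟩ := this hmem
    exact ⟨x, hx⟩
  · have := intermediate_value_Icc hy ((ellF_cont hp).continuousOn)
    have hmem : y ∈ Icc (ellF p y) (ellF p 0) := by
      rw [ellF_zero]; exact ⟨ellF_le_neg hp hy, hy⟩
    obtain ⟨x, _, hx⟩ := this hmem
    exact ⟨x, hx⟩

lemma ellg_periodic : Function.Periodic (ellg p) Real.pi := fun t => by
  simp [ellg, Real.sin_add_pi]

lemma ellF_pi (hp : p^2 < 1) : ellF p Real.pi = 2 * ellK p := by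
  have h1 : ellF p Real.pi = ellK p + ∫ t in (Real.pi/2)..Real.pi, ellg p t := by
    rw [ellK, ellF, ellF, ← intervalIntegral.integral_add_adjacent_intervals
      (ellg_intble hp 0 (Real.pi/2)) (ellg_intble hp (Real.pi/2) Real.pi)]
  have h2 : (∫ t in (Real.pi/2)..Real.pi, ellg p t) = ellK p := by
    have := intervalIntegral.integral_comp_sub_left (a := (0:ℝ)) (b := Real.pi/2)
      (fun t => ellg p t) Real.pi
    have heq : ∀ x, ellg p (Real.pi - x) = ellg p x := fun x => by
      simp [ellg, Real.sin_pi_sub]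
    simp only [heq, sub_zero] at this
    rw [show Real.pi - Real.pi/2 = Real.pi/2 by ring] at this
    rw [ellK, ellF, this]
  rw [h1, h2]; ring

lemma ellF_add_pi (hp : p^2 < 1) (θ : ℝ) :
    ellF p (θ + Real.pi) = ellF p θ + 2 * ellK p := by
  have h1 : ellF p (θ + Real.pi) = ellF p Real.pi + ∫ t in Real.pi..(θ + Real.pi), ellg p t := by
    rw [ellF, ellF, ← intervalIntegral.integral_add_adjacent_intervals
      (ellg_intble hp 0 Real.pi) (ellg_intble hp Real.pi (θ + Real.pi))]
  have h2 : (∫ t in Real.pi..(θ + Real.pi), ellg p t) = ellF p θ := by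
    have := intervalIntegral.integral_comp_add_right (a := (0:ℝ)) (b := θ)
      (fun t => ellg p t) Real.pi
    have heq : ∀ x, ellg p (x + Real.pi) = ellg p x := fun x => ellg_periodic x
    simp only [heq, zero_add] at this
    rw [ellF, ← this]
  rw [h1, h2, ellF_pi hp]; ring

lemma ellF_nat_pi (hp : p^2 < 1) (n : ℕ) : ellF p (n * Real.pi) = 2 * n * ellK p := by
  induction n with
  | zero => simp [ellF_zero]
  | succ n ih =>
    have : ((n+1 : ℕ) : ℝ) * Real.pi = n * Real.pi + Real.pi := by push_cast; ring
    rw [this, ellF_add_pi hp, ih]; push_cast; ring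

lemma ellF_int_pi (hp : p^2 < 1) (n : ℤ) : ellF p (n * Real.pi) = 2 * n * ellK p := by
  rcases le_or_gt 0 n with hn | hn
  · lift n to ℕ using hn
    exact_mod_cast ellF_nat_pi hp n
  · have h := ellF_nat_pi hp (-n).toNat
    have hn2 : ((-n).toNat : ℤ) = -n := Int.toNat_of_nonneg (by omega)
    have hn' : ((-n).toNat : ℝ) = -(n:ℝ) := by exact_mod_cast congrArg (Int.cast : ℤ → ℝ) hn2
    rw [hn'] at h
    have := ellF_neg hp (n * Real.pi)
    rw [show -((n:ℝ) * Real.pi) = -(n:ℝ) * Real.pi by ring, h] at this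
    linarith

noncomputable def ellam (p : ℝ) : ℝ → ℝ := Function.invFun (ellF p)

lemma ellam_left (hp : p^2 < 1) (θ : ℝ) : ellam p (ellF p θ) = θ :=
  Function.leftInverse_invFun (ellF_mono hp).injective θ

lemma ellam_right (hp : p^2 < 1) (y : ℝ) : ellF p (ellam p y) = y :=
  Function.rightInverse_invFun (ellF_surj hp) y

lemma ellam_mono (hp : p^2 < 1) : Monotone (ellam p) := by
  intro y1 y2 h
  by_contra hc
  push_neg at hc
  have := (ellF_mono hp) hc
  rw [ellam_right hp, ellam_right hp] at this
  linarith

lemma ellam_surj (hp : p^2 < 1) : Function.Surjective (ellam p) :=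
  fun θ => ⟨ellF p θ, ellam_left hp θ⟩

lemma ellam_cont (hp : p^2 < 1) : Continuous (ellam p) :=
  (ellam_mono hp).continuous_of_surjective (ellam_surj hp)

lemma ellam_hasDeriv (hp : p^2 < 1) (y : ℝ) :
    HasDerivAt (ellam p) (Real.sqrt (1 - p^2 * Real.sin (ellam p y) ^ 2)) y := by
  have hne : ellg p (ellam p y) ≠ 0 := (ellg_pos hp _).ne'
  have h := HasDerivAt.of_local_left_inverse (ellam_cont hp).continuousAt
    (ellF_hasDeriv hp (ellam p y)) hne
    (Eventually.of_forall (fun z => ellam_right hp z))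
  have : (ellg p (ellam p y))⁻¹ = Real.sqrt (1 - p^2 * Real.sin (ellam p y) ^ 2) := by
    rw [ellg, one_div, inv_inv]
  rwa [this] at h

noncomputable def ellsn (p x : ℝ) : ℝ := Real.sin (ellam p x)
noncomputable def ellds (p x : ℝ) : ℝ :=
  Real.cos (ellam p x) * Real.sqrt (1 - p^2 * ellsn p x ^ 2)
noncomputable def elldds (p x : ℝ) : ℝ := -(1 + p^2) * ellsn p x + 2 * p^2 * ellsn p x ^ 3

lemma ellam_zero (hp : p^2 < 1) : ellam p 0 = 0 := by
  have := ellam_left hp 0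
  rwa [ellF_zero] at this

lemma ellsn_hasDeriv (hp : p^2 < 1) (x : ℝ) : HasDerivAt (ellsn p) (ellds p x) x := by
  have h := (Real.hasDerivAt_sin (ellam p x)).comp x (ellam_hasDeriv hp x)
  exact h

lemma ellds_hasDeriv (hp : p^2 < 1) (x : ℝ) : HasDerivAt (ellds p) (elldds p x) x := by
  set s := ellsn p x with hs
  set w := Real.sqrt (1 - p^2 * s ^ 2) with hw
  have hpos : 0 < 1 - p^2 * s ^ 2 := by
    have := ell_pos hp (p := p) (ellam p x); exact this
  have hwpos : 0 < w := Real.sqrt_pos.2 hpos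
  have hw2 : w ^ 2 = 1 - p^2 * s ^ 2 := Real.sq_sqrt hpos.le
  -- derivative of inner function u x = 1 - p^2 * (ellsn p x)^2
  have hu : HasDerivAt (fun y => 1 - p^2 * ellsn p y ^ 2)
      (-(p^2) * (2 * s * ellds p x)) x := by
    have := ((ellsn_hasDeriv hp x).pow 2).const_mul (p^2)
    have h2 := (hasDerivAt_const x (1:ℝ)).sub this
    exact h2.congr_deriv (by push_cast; ring)
  have hwd : HasDerivAt (fun y => Real.sqrt (1 - p^2 * ellsn p y ^ 2))
      ((-(p^2) * (2 * s * ellds p x)) / (2 * w)) x := hu.sqrt hpos.ne'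
  have hcd : HasDerivAt (fun y => Real.cos (ellam p y))
      (-Real.sin (ellam p x) * Real.sqrt (1 - p^2 * Real.sin (ellam p x) ^ 2)) x := by
    have := (Real.hasDerivAt_cos (ellam p x)).comp x (ellam_hasDeriv hp x)
    exact this.congr_deriv (by ring)
  have hds : ellds p x = Real.cos (ellam p x) * w := rfl
  have hsimp : -(p^2) * (2 * s * ellds p x) / (2 * w) = -(p^2) * s * Real.cos (ellam p x) := by
    rw [hds]; field_simp
  rw [hsimp] at hwd
  have h := hcd.mul hwd
  have hsin : Real.sin (ellam p x) = s := rfl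
  have hcos2 : Real.cos (ellam p x) * Real.cos (ellam p x) = 1 - s ^ 2 := by
    have := Real.sin_sq_add_cos_sq (ellam p x)
    rw [hsin] at this; nlinarith [this]
  have hww : Real.sqrt (1 - p^2 * s ^ 2) * Real.sqrt (1 - p^2 * s ^ 2) = 1 - p^2 * s ^ 2 :=
    Real.mul_self_sqrt hpos.le
  refine h.congr_deriv ?_
  symm
  rw [elldds, hsin, ← hs]
  linear_combination s * hww + p^2 * s * hcos2

lemma ellK_pos (hp : p^2 < 1) : 0 < ellK p :=
  lt_of_lt_of_le (by positivity) (ellF_ge hp (by positivity))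

lemma ellam_K (hp : p^2 < 1) : ellam p (ellK p) = Real.pi / 2 := ellam_left hp _

lemma ellsn_K (hp : p^2 < 1) : ellsn p (ellK p) = 1 := by
  rw [ellsn, ellam_K hp, Real.sin_pi_div_two]

lemma ellsn_eq_zero_iff (hp : p^2 < 1) (x : ℝ) :
    ellsn p x = 0 ↔ ∃ n : ℤ, x = 2 * n * ellK p := by
  rw [ellsn, Real.sin_eq_zero_iff]
  constructor
  · rintro ⟨n, hn⟩
    refine ⟨n, ?_⟩
    have : ellF p ((n:ℝ) * Real.pi) = ellF p (ellam p x) := by rw [hn]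
    rw [ellF_int_pi hp, ellam_right hp] at this
    linarith
  · rintro ⟨n, hn⟩
    refine ⟨n, ?_⟩
    rw [hn, ← ellF_int_pi hp n, ellam_left hp]

lemma elldds_cont (hp : p^2 < 1) : Continuous (elldds p) := by
  have : Continuous (ellsn p) := Real.continuous_sin.comp (ellam_cont hp)
  unfold elldds
  fun_prop

lemma ellsn_contDiff2 (hp : p^2 < 1) : ContDiff ℝ 2 (ellsn p) := by
  have hd1 : deriv (ellsn p) = ellds p := funext fun x => (ellsn_hasDeriv hp x).deriv
  have hd2 : deriv (ellds p) = elldds p := funext fun x => (ellds_hasDeriv hp x).deriv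
  rw [show (2 : WithTop ℕ∞) = 1 + 1 by norm_num, contDiff_succ_iff_deriv]
  refine ⟨fun x => (ellsn_hasDeriv hp x).differentiableAt, by simp, ?_⟩
  rw [hd1, contDiff_one_iff_deriv, hd2]
  exact ⟨fun x => (ellds_hasDeriv hp x).differentiableAt, elldds_cont hp⟩

lemma ellK_zero : ellK 0 = Real.pi / 2 := by
  have : ∀ t : ℝ, ellg 0 t = 1 := fun t => by simp [ellg]
  simp [ellK, ellF, this]

lemma ellK_continuousAt {p₀ : ℝ} (hp₀ : p₀^2 < 1) : ContinuousAt ellK p₀ := by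
  have habs : |p₀| < 1 := (sq_lt_one_iff_abs_lt_one p₀).1 hp₀
  set q : ℝ := (1 + |p₀|) / 2 with hq
  have hq1 : q < 1 := by rw [hq]; linarith
  have hq0 : 0 < q := by rw [hq]; positivity
  have hpq : |p₀| < q := by rw [hq]; linarith
  have hqsq : q^2 < 1 := by nlinarith
  have hnhds : ∀ᶠ x in 𝓝 p₀, |x| < q := by
    have : Continuous (fun x : ℝ => |x|) := continuous_abs
    exact this.continuousAt.eventually_lt continuousAt_const hpq
  refine intervalIntegral.continuousAt_of_dominated_interval
    (bound := fun _ => 1 / Real.sqrt (1 - q^2)) ?_ ?_ ?_ ?_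
  · filter_upwards [hnhds] with x hx
    have hx2 : x^2 < 1 := by nlinarith [abs_nonneg x, sq_abs x]
    exact ((ellg_cont hx2).aestronglyMeasurable).restrict
  · filter_upwards [hnhds] with x hx
    refine Eventually.of_forall fun t _ => ?_
    have hx2 : x^2 < 1 := by nlinarith [abs_nonneg x, sq_abs x]
    rw [Real.norm_eq_abs, abs_of_pos (ellg_pos hx2 t)]
    have h1 : 1 - q^2 ≤ 1 - x^2 * Real.sin t ^ 2 := by
      nlinarith [Real.sin_sq_le_one t, sq_abs x, abs_nonneg x, sq_nonneg (Real.sin t)]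
    rw [ellg]
    apply one_div_le_one_div_of_le (Real.sqrt_pos.2 (by nlinarith)) (Real.sqrt_le_sqrt h1)
  · exact intervalIntegrable_const
  · refine Eventually.of_forall fun t _ => ?_
    have hden : ContinuousAt (fun x : ℝ => Real.sqrt (1 - x^2 * Real.sin t ^ 2)) p₀ :=
      (Real.continuous_sqrt.comp (by continuity)).continuousAt
    have hne : Real.sqrt (1 - p₀^2 * Real.sin t ^ 2) ≠ 0 :=
      (Real.sqrt_pos.2 (ell_pos hp₀ t)).ne'
    exact (continuousAt_const.div hden hne)

lemma ellK_lower (hp0 : 0 ≤ p) (hp : p^2 < 1) :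
    Real.log ((Real.pi/2 + Real.sqrt (1 - p^2)) / Real.sqrt (1 - p^2)) ≤ ellK p := by
  set c := Real.sqrt (1 - p^2) with hc
  have hc0 : 0 < c := Real.sqrt_pos.2 (by nlinarith)
  have hc2 : c^2 = 1 - p^2 := Real.sq_sqrt (by nlinarith)
  have pi2 : 0 < Real.pi / 2 := by positivity
  -- pointwise bound on [0, π/2]
  have key : ∀ t ∈ Icc (0:ℝ) (Real.pi/2), 1 / (Real.pi/2 - t + c) ≤ ellg p t := by
    intro t ht
    have hcos : 0 ≤ Real.cos t := Real.cos_nonneg_of_mem_Icc ⟨by linarith [ht.1, Real.pi_pos], ht.2⟩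
    have hA : 1 - p^2 * Real.sin t ^ 2 = Real.cos t ^ 2 + c^2 * Real.sin t ^ 2 := by
      rw [hc2]; nlinarith [Real.sin_sq_add_cos_sq t]
    have h1 : Real.sqrt (1 - p^2 * Real.sin t ^ 2) ≤ Real.cos t + c := by
      rw [show Real.cos t + c = Real.sqrt ((Real.cos t + c)^2) from
        (Real.sqrt_sq (by positivity)).symm]
      apply Real.sqrt_le_sqrt
      rw [hA]
      nlinarith [Real.sin_sq_le_one t, sq_nonneg c, mul_nonneg hc0.le hcos]
    have h2 : Real.cos t ≤ Real.pi/2 - t := by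
      have := Real.sin_le (x := Real.pi/2 - t) (by linarith [ht.2])
      rwa [Real.sin_pi_div_two_sub] at this
    have hden : 0 < Real.pi/2 - t + c := by linarith [ht.2]
    rw [ellg]
    apply one_div_le_one_div_of_le (Real.sqrt_pos.2 (ell_pos hp t))
    linarith
  -- the comparison integral
  have hcont : ContinuousOn (fun t => 1 / (Real.pi/2 - t + c)) (uIcc (0:ℝ) (Real.pi/2)) := by
    apply ContinuousOn.div continuousOn_const (by fun_prop)
    intro t ht
    rw [uIcc_of_le (by linarith)] at ht
    have := ht.2
    intro h; nlinarith [ht.2]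
  have hint : IntervalIntegrable (fun t => 1 / (Real.pi/2 - t + c)) volume 0 (Real.pi/2) :=
    hcont.intervalIntegrable
  have hmono : (∫ t in (0:ℝ)..(Real.pi/2), 1 / (Real.pi/2 - t + c)) ≤ ellK p := by
    apply intervalIntegral.integral_mono_on (by linarith) hint (ellg_intble hp _ _) key
  refine le_trans (le_of_eq ?_) hmono
  -- compute the comparison integral
  have e1 : (∫ t in (0:ℝ)..(Real.pi/2), 1 / (Real.pi/2 - t + c))
      = ∫ u in (0:ℝ)..(Real.pi/2), 1 / (u + c) := by
    have := intervalIntegral.integral_comp_sub_left (a := (0:ℝ)) (b := Real.pi/2)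
      (fun u => 1 / (u + c)) (Real.pi/2)
    rw [show Real.pi/2 - Real.pi/2 = 0 by ring, sub_zero] at this
    rw [← this]
  have e2 : (∫ u in (0:ℝ)..(Real.pi/2), 1 / (u + c))
      = ∫ x in c..(Real.pi/2 + c), 1 / x := by
    have := intervalIntegral.integral_comp_add_right (a := (0:ℝ)) (b := Real.pi/2)
      (fun x => 1 / x) c
    rw [zero_add] at this
    rw [← this]
  rw [e1, e2, integral_one_div]
  intro hmem
  rw [uIcc_of_le (by linarith)] at hmem
  linarith [hmem.1]

lemma ellsn_zero' (hp : p^2 < 1) : ellsn p 0 = 0 := by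
  rw [ellsn, ellam_zero hp, Real.sin_zero]

lemma elldds_eq (hp : p^2 < 1) (x : ℝ) :
    elldds p x = -(1 + p^2) * ellsn p x + 2 * p^2 * ellsn p x ^ 3 := rfl

end EllipticAux

set_option maxHeartbeats 1000000

/-- global existence of the branch of quantum states bifurcating from
`(0, β_k)`, with the nodal structure of the `k`-th Dirichlet eigenfunction. -/
theorem stmt_12 (ℏ m lam L g : ℝ) (hℏ : 0 < ℏ) (hm : 0 < m) (hL : 0 < L)
    (hg : 0 < g) (k : ℕ) (hk : 1 ≤ k) (β : ℝ) (hβ : β < betaCrit ℏ m lam L k) :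
    ∃ φ : ℝ → ℝ,
      IsGPSolution ℏ m lam g 0 L β φ ∧
      (∃ x ∈ Set.Icc (0:ℝ) L, φ x ≠ 0) ∧
      {x ∈ Set.Ioo (0:ℝ) L | φ x = 0}.Finite ∧
      {x ∈ Set.Ioo (0:ℝ) L | φ x = 0}.ncard = k - 1 ∧
      IsGPSolution ℏ m lam g 0 L β (fun x => -φ x) ∧
      (∃ x ∈ Set.Icc (0:ℝ) L, φ x ≠ -φ x) := by
  have hπ := Real.pi_pos
  have hk1 : (1:ℝ) ≤ (k:ℝ) := by exact_mod_cast hk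
  have hkpos : (0:ℝ) < k := by linarith
  obtain ⟨C, hC⟩ : ∃ C : ℝ, C = ℏ^2 / (4*m) := ⟨_, rfl⟩
  have hCpos : 0 < C := by rw [hC]; positivity
  have hβ' : C * ((k:ℝ) * Real.pi / L)^2 < ℏ * lam - β := by
    rw [betaCrit] at hβ; rw [hC]; linarith
  -- the frequency ω
  obtain ⟨ω, hωpos, hωsq, hωgt⟩ :
      ∃ ω : ℝ, 0 < ω ∧ C * ω^2 = ℏ*lam - β ∧ (k:ℝ) * Real.pi / L < ω := by
    have harg : 0 < (ℏ*lam - β) / C := by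
      have h1 : 0 < ℏ*lam - β := lt_trans (by positivity) hβ'
      positivity
    refine ⟨Real.sqrt ((ℏ*lam - β) / C), Real.sqrt_pos.2 harg, ?_, ?_⟩
    · rw [Real.sq_sqrt harg.le]
      field_simp
    · have hsq : ((k:ℝ) * Real.pi / L)^2 < Real.sqrt ((ℏ*lam - β) / C) ^ 2 := by
        rw [Real.sq_sqrt harg.le, lt_div_iff₀ hCpos]
        linarith [hβ']
      exact lt_of_pow_lt_pow_left₀ 2 (Real.sqrt_nonneg _) hsq
  -- find the modulus p via IVT
  obtain ⟨p, hppos, hp2, hpeq⟩ :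
      ∃ p : ℝ, 0 < p ∧ p^2 < 1 ∧ 2*(k:ℝ)*ellK p*Real.sqrt (1+p^2)/L = ω := by
    obtain ⟨M, hM⟩ : ∃ M : ℝ, M = ω * L / (2*k) := ⟨_, rfl⟩
    have hMpos : 0 < M := by rw [hM]; positivity
    obtain ⟨c₀, hc₀⟩ : ∃ c₀ : ℝ, c₀ = min (1/2) ((Real.pi/2) * Real.exp (-M)) := ⟨_, rfl⟩
    have hc₀pos : 0 < c₀ := by rw [hc₀]; exact lt_min (by norm_num) (by positivity)
    have hc₀lt : c₀ < 1 := by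
      rw [hc₀]; exact lt_of_le_of_lt (min_le_left _ _) (by norm_num)
    obtain ⟨p₀, hp₀def⟩ : ∃ p₀ : ℝ, p₀ = Real.sqrt (1 - c₀^2) := ⟨_, rfl⟩
    have hp₀sq : p₀^2 = 1 - c₀^2 := by rw [hp₀def]; exact Real.sq_sqrt (by nlinarith)
    have hp₀lt : p₀^2 < 1 := by rw [hp₀sq]; nlinarith
    have hp₀nn : 0 ≤ p₀ := by rw [hp₀def]; exact Real.sqrt_nonneg _
    have hcp₀ : Real.sqrt (1 - p₀^2) = c₀ := by
      rw [hp₀sq, show 1 - (1 - c₀^2) = c₀^2 by ring, Real.sqrt_sq hc₀pos.le]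
    have hKp₀ : M ≤ ellK p₀ := by
      have h1 := ellK_lower hp₀nn hp₀lt
      rw [hcp₀] at h1
      refine le_trans ?_ h1
      have h2 : Real.exp M ≤ (Real.pi/2 + c₀) / c₀ := by
        rw [le_div_iff₀ hc₀pos]
        have hmin : c₀ ≤ (Real.pi/2) * Real.exp (-M) := by rw [hc₀]; exact min_le_right _ _
        have h3 : Real.exp M * c₀ ≤ Real.exp M * ((Real.pi/2) * Real.exp (-M)) :=
          mul_le_mul_of_nonneg_left hmin (Real.exp_nonneg M)
        rw [show Real.exp M * ((Real.pi/2) * Real.exp (-M))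
            = (Real.exp M * Real.exp (-M)) * (Real.pi/2) by ring, ← Real.exp_add] at h3
        simp at h3
        linarith
      calc M = Real.log (Real.exp M) := (Real.log_exp M).symm
      _ ≤ _ := Real.log_le_log (Real.exp_pos M) h2
    obtain ⟨Φ, hΦ⟩ : ∃ Φ : ℝ → ℝ, Φ = fun q => 2*(k:ℝ)*ellK q*Real.sqrt (1+q^2)/L := ⟨_, rfl⟩
    have hΦ0 : Φ 0 = (k:ℝ) * Real.pi / L := by
      rw [hΦ]; simp [ellK_zero]; ring
    have hΦp₀ : ω ≤ Φ p₀ := by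
      rw [hΦ]
      have h1 : (1:ℝ) ≤ Real.sqrt (1 + p₀^2) := by
        have := Real.sqrt_le_sqrt (show (1:ℝ) ≤ 1 + p₀^2 by nlinarith)
        rwa [Real.sqrt_one] at this
      have h2 : 2*(k:ℝ)*M*1 ≤ 2*(k:ℝ)*ellK p₀*Real.sqrt (1+p₀^2) :=
        mul_le_mul (by nlinarith) h1 (by norm_num) (by nlinarith [hKp₀, hMpos])
      simp only []
      rw [le_div_iff₀ hL]
      calc ω * L = 2*(k:ℝ)*M*1 := by rw [hM]; field_simp
      _ ≤ _ := h2
    have hΦcont : ContinuousOn Φ (Icc 0 p₀) := by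
      intro q hq
      have hq2 : q^2 < 1 := by
        rcases hq with ⟨h1, h2⟩
        nlinarith
      apply ContinuousAt.continuousWithinAt
      rw [hΦ]
      exact (((continuousAt_const.mul (ellK_continuousAt hq2)).mul
        ((Real.continuous_sqrt.comp (by continuity)).continuousAt)).div_const L)
    obtain ⟨q, hqmem, hqeq⟩ : ∃ q ∈ Icc (0:ℝ) p₀, Φ q = ω := by
      have h := intermediate_value_Icc hp₀nn hΦcont
      have hωmem : ω ∈ Icc (Φ 0) (Φ p₀) := ⟨by rw [hΦ0]; linarith, hΦp₀⟩
      obtain ⟨x, hx, hfx⟩ := h hωmem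
      exact ⟨x, hx, hfx⟩
    have hq2 : q^2 < 1 := by rcases hqmem with ⟨h1, h2⟩; nlinarith
    have hqpos : 0 < q := by
      rcases lt_or_eq_of_le hqmem.1 with h | h
      · exact h
      · exfalso
        rw [← h, hΦ0] at hqeq
        linarith
    refine ⟨q, hqpos, hq2, ?_⟩
    rw [← hqeq, hΦ]
  have hKpos := ellK_pos hp2
  -- constants
  obtain ⟨B, hBdef⟩ : ∃ B : ℝ, B = 2*(k:ℝ)*ellK p / L := ⟨_, rfl⟩
  have hBpos : 0 < B := by rw [hBdef]; positivity
  have hBL : B * L = 2*(k:ℝ)*ellK p := by rw [hBdef]; field_simp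
  have hBω : B * Real.sqrt (1+p^2) = ω := by
    rw [hBdef, ← hpeq]; ring
  have hB2 : (1+p^2) * B^2 = ω^2 := by
    rw [← hBω, mul_pow, Real.sq_sqrt (by positivity)]
    ring
  obtain ⟨A, hApos, hA2⟩ : ∃ A : ℝ, 0 < A ∧ g * A^2 = C * (2*p^2*B^2) := by
    refine ⟨Real.sqrt (C * (2*p^2*B^2) / g), Real.sqrt_pos.2 (by positivity), ?_⟩
    rw [Real.sq_sqrt (by positivity)]
    field_simp
  obtain ⟨φ, hφ⟩ : ∃ φ : ℝ → ℝ, φ = fun x => A * ellsn p (B * x) := ⟨_, rfl⟩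
  -- derivatives
  have hBx : ∀ x : ℝ, HasDerivAt (fun y : ℝ => B * y) B x := fun x => by
    simpa using (hasDerivAt_id x).const_mul B
  have hφd : ∀ x, HasDerivAt φ (A * B * ellds p (B * x)) x := by
    intro x
    rw [hφ]
    have h := ((ellsn_hasDeriv hp2 (B*x)).comp x (hBx x)).const_mul A
    exact h.congr_deriv (by ring)
  have hd1 : deriv φ = fun x => A * B * ellds p (B * x) := funext fun x => (hφd x).deriv
  have hφdd : ∀ x, deriv (deriv φ) x = A * B^2 * elldds p (B * x) := by
    intro x
    rw [hd1]
    have h := ((ellds_hasDeriv hp2 (B*x)).comp x (hBx x)).const_mul (A*B)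
    have h2 : HasDerivAt (fun y => A * B * ellds p (B * y)) (A * B^2 * elldds p (B*x)) x := by
      exact h.congr_deriv (by ring)
    exact h2.deriv
  have hcd2 : ContDiff ℝ 2 φ := by
    rw [hφ]
    exact contDiff_const.mul ((ellsn_contDiff2 hp2).comp (contDiff_const.mul contDiff_id))
  -- the solution property
  have hCB : C * ((1+p^2) * B^2) = ℏ*lam - β := by rw [hB2, hωsq]
  have hsol : IsGPSolution ℏ m lam g 0 L β φ := by
    refine ⟨hcd2.continuous.continuousOn, hcd2.contDiffOn, ?_, ?_, ?_⟩
    · intro x hx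
      rw [hφdd x, elldds_eq hp2, hφ]
      simp only []
      rw [← hC]
      linear_combination (A * ellsn p (B*x)) * hCB + (A * ellsn p (B*x)^3) * hA2
    · rw [hφ]
      simp only [mul_zero]
      rw [ellsn_zero' hp2, mul_zero]
    · rw [hφ]
      simp only []
      have hz : ellsn p (B * L) = 0 := by
        rw [ellsn_eq_zero_iff hp2]
        exact ⟨(k:ℤ), by rw [hBL]; push_cast; ring⟩
      rw [hz, mul_zero]
  -- the nonvanishing point
  have hhalf : (L/(2*k) : ℝ) ∈ Icc (0:ℝ) L := by
    constructor
    · positivity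
    · rw [div_le_iff₀ (by positivity)]
      nlinarith
  have hφhalf : φ (L/(2*k)) = A := by
    have hBhalf : B * (L/(2*k)) = ellK p := by
      rw [hBdef]; field_simp
    rw [hφ]
    simp only []
    rw [hBhalf, ellsn_K hp2, mul_one]
  -- zero set
  have hLk : 2 * ellK p / B = L / k := by
    rw [hBdef]; field_simp
  have hLkpos : (0:ℝ) < L/(k:ℝ) := by positivity
  have hzero_iff : ∀ x, φ x = 0 ↔ ∃ n : ℤ, x = (n:ℝ) * (L/(k:ℝ)) := by
    intro x
    rw [hφ]
    simp only [mul_eq_zero]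
    constructor
    · rintro (h | h)
      · exact absurd h hApos.ne'
      · rw [ellsn_eq_zero_iff hp2] at h
        obtain ⟨n, hn⟩ := h
        refine ⟨n, ?_⟩
        rw [← hLk]
        field_simp at hn ⊢
        linarith
    · rintro ⟨n, hn⟩
      right
      rw [ellsn_eq_zero_iff hp2]
      refine ⟨n, ?_⟩
      rw [hn, ← hLk]
      field_simp
  have hset : {x ∈ Set.Ioo (0:ℝ) L | φ x = 0}
      = (fun n : ℤ => (n:ℝ) * (L/(k:ℝ))) '' (Set.Ioo (0:ℤ) (k:ℤ)) := by
    ext x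
    simp only [Set.mem_setOf_eq, Set.mem_image, Set.mem_Ioo]
    constructor
    · rintro ⟨⟨hx0, hxL⟩, hz⟩
      obtain ⟨n, hn⟩ := (hzero_iff x).1 hz
      refine ⟨n, ⟨?_, ?_⟩, hn.symm⟩
      · have hpos : (0:ℝ) < (n:ℝ) := by
          by_contra hcon
          push_neg at hcon
          have : (n:ℝ) * (L/(k:ℝ)) ≤ 0 := mul_nonpos_of_nonpos_of_nonneg hcon hLkpos.le
          rw [← hn] at this; linarith
        exact_mod_cast hpos
      · have hkk : (k:ℝ) * (L/(k:ℝ)) = L := by field_simp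
        have hlt : (n:ℝ) * (L/(k:ℝ)) < (k:ℝ) * (L/(k:ℝ)) := by
          rw [← hn, hkk]; exact hxL
        have : (n:ℝ) < (k:ℝ) := lt_of_mul_lt_mul_right hlt hLkpos.le
        exact_mod_cast this
    · rintro ⟨n, ⟨hn0, hnk⟩, hn⟩
      have hn0' : (1:ℝ) ≤ (n:ℝ) := by exact_mod_cast hn0
      have hnk' : (n:ℝ) ≤ (k:ℝ) - 1 := by
        have h5 : (n:ℤ) ≤ (k:ℤ) - 1 := by omega
        exact_mod_cast h5
      refine ⟨⟨?_, ?_⟩, (hzero_iff x).2 ⟨n, hn.symm⟩⟩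
      · rw [← hn]; nlinarith
      · rw [← hn]
        have hkk : (k:ℝ) * (L/(k:ℝ)) = L := by field_simp
        nlinarith
  have hinj : Function.Injective (fun n : ℤ => (n:ℝ) * (L/(k:ℝ))) := by
    intro a b hab
    simp only [] at hab
    have : (a:ℝ) = (b:ℝ) := mul_right_cancel₀ hLkpos.ne' hab
    exact_mod_cast this
  have hfin : {x ∈ Set.Ioo (0:ℝ) L | φ x = 0}.Finite := by
    rw [hset]
    exact (Set.finite_Ioo _ _).image _
  have hcard : {x ∈ Set.Ioo (0:ℝ) L | φ x = 0}.ncard = k - 1 := by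
    rw [hset, Set.ncard_image_of_injective _ hinj,
      ← Finset.coe_Ioo, Set.ncard_coe_finset, Int.card_Ioo]
    omega
  -- the negated solution
  have hnegd : ∀ x, deriv (deriv (fun y => -φ y)) x = -(deriv (deriv φ) x) := by
    have h1 : deriv (fun y => -φ y) = fun y => -(deriv φ y) := funext fun y => deriv.neg
    intro x
    rw [h1]
    exact deriv.neg
  have hnsol : IsGPSolution ℏ m lam g 0 L β (fun x => -φ x) := by
    obtain ⟨hc, hcd, heq, h0, hLb⟩ := hsol
    refine ⟨hc.neg, hcd.neg, ?_, by simp [h0], by simp [hLb]⟩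
    intro x hx
    have h := heq x hx
    rw [hnegd x]
    ring_nf
    ring_nf at h
    linarith
  exact ⟨φ, hsol, ⟨L/(2*k), hhalf, by rw [hφhalf]; exact hApos.ne'⟩, hfin, hcard, hnsol,
    ⟨L/(2*k), hhalf, by rw [hφhalf]; intro h; linarith⟩⟩
end

section
/- Let g > 0 and let k ≥ 1 be an integer. If there exists a GP solution φ on [0,L] with parameter β, continuously differentiable on [0,L], not identically zero, and having exactly k − 1 interior zeros, then β < β_k. (Conversely to the existence result: quantum states with the nodal pattern of the k-th mode occur only past the k-th quantum critical point; together with existence this yields the staircase structure of quantum states in Figure 7.) -/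
open Set MeasureTheory intervalIntegral Filter Topology


lemma exists_gap (L : ℝ) (hL : 0 < L) (k : ℕ) (hk : 1 ≤ k) (Z : Set ℝ)
    (hZ : Z ⊆ Set.Ioo 0 L) (hfin : Z.Finite) (hcard : Z.ncard = k - 1) :
    ∃ a b : ℝ, 0 ≤ a ∧ a < b ∧ b ≤ L ∧ (k : ℝ) * (b - a) ≤ L ∧
      (a = 0 ∨ a ∈ Z) ∧ (b = L ∨ b ∈ Z) ∧ ∀ x ∈ Set.Ioo a b, x ∉ Z := by
  classical
  set s : Finset ℝ := insert 0 (insert L hfin.toFinset) with hs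
  have hmem_s : ∀ x, x ∈ s ↔ x = 0 ∨ x = L ∨ x ∈ Z := by
    intro x; simp [hs, hfin.mem_toFinset]
  have hLnot : L ∉ hfin.toFinset := fun h => (hZ (hfin.mem_toFinset.1 h)).2.ne rfl
  have h0not : (0:ℝ) ∉ insert L hfin.toFinset := by
    simp only [Finset.mem_insert, hfin.mem_toFinset]
    push_neg
    exact ⟨hL.ne, fun h => (hZ h).1.ne rfl⟩
  have hZcard : hfin.toFinset.card = k - 1 := by
    rw [← hcard, Set.ncard_eq_toFinset_card Z hfin]
  have hcards : s.card = k + 1 := by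
    rw [hs, Finset.card_insert_of_notMem h0not, Finset.card_insert_of_notMem hLnot, hZcard]
    omega
  set iso := s.orderIsoOfFin hcards with hiso
  set e : ℕ → ℝ := fun i => (iso ⟨min i k, by omega⟩ : ℝ) with he
  have hemem : ∀ i, e i ∈ s := fun i => (iso _).2
  have hbound : ∀ x ∈ s, 0 ≤ x ∧ x ≤ L := by
    intro x hx
    rcases (hmem_s x).1 hx with h | h | h
    · exact ⟨le_of_eq h.symm, h ▸ hL.le⟩
    · exact ⟨h ▸ hL.le, le_of_eq h⟩
    · exact ⟨(hZ h).1.le, (hZ h).2.le⟩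
  have he0 : e 0 = 0 := by
    obtain ⟨j, hj⟩ := iso.surjective ⟨0, (hmem_s 0).2 (Or.inl rfl)⟩
    have h1 : iso ⟨min 0 k, by omega⟩ ≤ iso j := iso.monotone (by simp [Fin.le_def])
    have h2 : (iso j : ℝ) = 0 := by rw [hj]
    exact le_antisymm (h2 ▸ h1) (hbound _ (hemem 0)).1
  have hek : e k = L := by
    obtain ⟨j, hj⟩ := iso.surjective ⟨L, (hmem_s L).2 (Or.inr (Or.inl rfl))⟩
    have h1 : iso j ≤ iso ⟨min k k, by omega⟩ := iso.monotone (by simp [Fin.le_def]; omega)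
    have h2 : (iso j : ℝ) = L := by rw [hj]
    exact le_antisymm (hbound _ (hemem k)).2 (h2 ▸ h1)
  have hmono : ∀ i, i < k → e i < e (i + 1) := by
    intro i hi
    have : (⟨min i k, by omega⟩ : Fin (k+1)) < ⟨min (i+1) k, by omega⟩ := by
      simp [Fin.lt_def]; omega
    exact iso.strictMono this
  have hgap : ∃ i, i < k ∧ e (i + 1) - e i ≤ L / k := by
    by_contra h
    push_neg at h
    have hsum := Finset.sum_range_sub e k
    have hlt : ∑ _i ∈ Finset.range k, (L / k) < ∑ i ∈ Finset.range k, (e (i+1) - e i) := by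
      apply Finset.sum_lt_sum_of_nonempty (Finset.nonempty_range_iff.2 (by omega))
      intro i hi
      exact h i (Finset.mem_range.1 hi)
    rw [hsum, he0, hek, Finset.sum_const, Finset.card_range, nsmul_eq_mul] at hlt
    rw [mul_div_cancel₀] at hlt
    · linarith
    · exact_mod_cast Nat.pos_of_ne_zero (by omega) |>.ne'
  obtain ⟨i, hik, hgap⟩ := hgap
  refine ⟨e i, e (i+1), (hbound _ (hemem i)).1, hmono i hik, (hbound _ (hemem (i+1))).2, ?_, ?_, ?_, ?_⟩
  · have hkpos : (0:ℝ) < k := by exact_mod_cast hk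
    calc (k:ℝ) * (e (i+1) - e i) ≤ k * (L / k) := by
          apply mul_le_mul_of_nonneg_left hgap hkpos.le
      _ = L := by field_simp
  · rcases (hmem_s _).1 (hemem i) with h | h | h
    · exact Or.inl h
    · exfalso; have := hmono i hik; have := (hbound _ (hemem (i+1))).2; linarith [h ▸ this]
    · exact Or.inr h
  · rcases (hmem_s _).1 (hemem (i+1)) with h | h | h
    · exfalso; have := hmono i hik; have := (hbound _ (hemem i)).1; linarith [h ▸ this]
    · exact Or.inl h
    · exact Or.inr h
  · intro x hx hxZ
    obtain ⟨j, hj⟩ := iso.surjective ⟨x, (hmem_s x).2 (Or.inr (Or.inr hxZ))⟩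
    have hj1 : (iso ⟨min i k, by omega⟩ : ℝ) < iso j := by rw [hj]; exact hx.1
    have hj2 : (iso j : ℝ) < iso ⟨min (i+1) k, by omega⟩ := by rw [hj]; exact hx.2
    have h1 : (⟨min i k, by omega⟩ : Fin (k+1)) < j := iso.lt_iff_lt.1 (Subtype.coe_lt_coe.1 hj1)
    have h2 : j < (⟨min (i+1) k, by omega⟩ : Fin (k+1)) := iso.lt_iff_lt.1 (Subtype.coe_lt_coe.1 hj2)
    rw [Fin.lt_def] at h1 h2
    simp at h1 h2
    omega


private lemma sturm_aux (ℏ m lam L g : ℝ) (hℏ : 0 < ℏ) (hm : 0 < m) (hL : 0 < L)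
    (hg : 0 < g) (β : ℝ) (φ : ℝ → ℝ)
    (hcont : ContinuousOn φ (Set.Icc 0 L))
    (hC2 : ContDiffOn ℝ 2 φ (Set.Ioo 0 L))
    (hODE : ∀ x ∈ Set.Ioo (0:ℝ) L,
      -(ℏ ^ 2 / (4 * m)) * deriv (deriv φ) x + (β - ℏ * lam) * φ x + g * (φ x) ^ 3 = 0)
    (hC1 : ContDiffOn ℝ 1 φ (Set.Icc 0 L))
    (a b : ℝ) (ha0 : 0 ≤ a) (hab : a < b) (hbL : b ≤ L)
    (hφa : φ a = 0) (hφb : φ b = 0)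
    (hnz : ∀ x ∈ Set.Ioo a b, φ x ≠ 0)
    (hkey : ℏ * lam - β ≤ (ℏ ^ 2 / (4 * m)) * (Real.pi / (b - a)) ^ 2) :
    False := by
  set c : ℝ := ℏ ^ 2 / (4 * m) with hc_def
  have hc : 0 < c := by positivity
  set ℓ : ℝ := b - a with hl_def
  have hℓ : 0 < ℓ := sub_pos.2 hab
  set ω : ℝ := Real.pi / ℓ with hω_def
  have hω : 0 < ω := div_pos Real.pi_pos hℓ
  set ψ : ℝ → ℝ := fun x => Real.sin (ω * (x - a)) with hψ_def
  set P : ℝ → ℝ := fun x => ω * Real.cos (ω * (x - a)) with hP_def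
  set D : ℝ → ℝ := derivWithin φ (Set.Icc 0 L) with hD_def
  set W : ℝ → ℝ := fun x => φ x * P x - D x * ψ x with hW_def
  set F : ℝ → ℝ := fun x => -(ω ^ 2 + (β - ℏ * lam + g * (φ x) ^ 2) / c) * (φ x * ψ x)
    with hF_def
  have hsubIoo : Set.Ioo a b ⊆ Set.Ioo 0 L := Set.Ioo_subset_Ioo ha0 hbL
  have hsubIcc : Set.Icc a b ⊆ Set.Icc 0 L := Set.Icc_subset_Icc ha0 hbL
  -- ψ values at endpoints
  have hψa : ψ a = 0 := by simp [hψ_def]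
  have hψb : ψ b = 0 := by
    have : ω * (b - a) = Real.pi := by
      rw [hω_def, ← hl_def]; field_simp
    simp [hψ_def, this, Real.sin_pi]
  have hψpos : ∀ x ∈ Set.Ioo a b, 0 < ψ x := by
    intro x hx
    apply Real.sin_pos_of_pos_of_lt_pi
    · exact mul_pos hω (sub_pos.2 hx.1)
    · have h1 : ω * (x - a) < ω * ℓ := by
        apply mul_lt_mul_of_pos_left _ hω
        rw [hl_def]; linarith [hx.2]
      have h2 : ω * ℓ = Real.pi := by rw [hω_def]; field_simp
      linarith
  -- derivative of W on Ioo a b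
  have hW' : ∀ x ∈ Set.Ioo a b, HasDerivAt W (F x) x := by
    intro x hx
    have hx0L : x ∈ Set.Ioo (0:ℝ) L := hsubIoo hx
    have hmem : Set.Ioo (0:ℝ) L ∈ 𝓝 x := isOpen_Ioo.mem_nhds hx0L
    have hφdiff : DifferentiableAt ℝ φ x :=
      (hC2.differentiableOn two_ne_zero).differentiableAt hmem
    have hDeq : D =ᶠ[𝓝 x] deriv φ := by
      filter_upwards [hmem] with y hy
      exact derivWithin_of_mem_nhds (Filter.mem_of_superset (isOpen_Ioo.mem_nhds hy)
        Set.Ioo_subset_Icc_self)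
    have hDx : D x = deriv φ x := derivWithin_of_mem_nhds
      (Filter.mem_of_superset hmem Set.Ioo_subset_Icc_self)
    have hφ' : HasDerivAt φ (D x) x := hDx ▸ hφdiff.hasDerivAt
    have hd1 : ContDiffOn ℝ 1 (deriv φ) (Set.Ioo 0 L) :=
      hC2.deriv_of_isOpen isOpen_Ioo (by norm_num)
    have hφ''At : HasDerivAt (deriv φ) (deriv (deriv φ) x) x :=
      ((hd1.differentiableOn one_ne_zero).differentiableAt hmem).hasDerivAt
    have hD' : HasDerivAt D (deriv (deriv φ) x) x :=
      hφ''At.congr_of_eventuallyEq hDeq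
    -- ψ and P derivatives
    have hlin : HasDerivAt (fun y => ω * (y - a)) ω x := by
      simpa using ((hasDerivAt_id x).sub_const a).const_mul ω
    have hψ' : HasDerivAt ψ (Real.cos (ω * (x - a)) * ω) x :=
      by have := (Real.hasDerivAt_sin (ω * (x - a))).comp x hlin; rw [hψ_def]; exact this
    have hP' : HasDerivAt P (ω * (-Real.sin (ω * (x - a)) * ω)) x :=
      by have := ((Real.hasDerivAt_cos (ω * (x - a))).comp x hlin).const_mul ω; rw [hP_def]; exact this
    have hWd : HasDerivAt W
        (D x * P x + φ x * (ω * (-Real.sin (ω * (x - a)) * ω))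
          - (deriv (deriv φ) x * ψ x + D x * (Real.cos (ω * (x - a)) * ω))) x :=
      (hφ'.mul hP').sub (hD'.mul hψ')
    have hode := hODE x hx0L
    have hphi'' : deriv (deriv φ) x = ((β - ℏ * lam) * φ x + g * (φ x) ^ 3) / c := by
      field_simp
      linarith
    convert hWd using 1
    rw [hphi'']
    simp only [hF_def, hψ_def, hP_def]
    field_simp
    ring
  -- continuity of W on [a,b]
  have hDcont : ContinuousOn D (Set.Icc 0 L) :=
    hC1.continuousOn_derivWithin (uniqueDiffOn_Icc hL) le_rfl
  have hWcont : ContinuousOn W (Set.Icc a b) := by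
    apply ContinuousOn.sub
    · exact (hcont.mono hsubIcc).mul (Continuous.continuousOn (by fun_prop))
    · exact (hDcont.mono hsubIcc).mul (Continuous.continuousOn (by fun_prop))
  have hFcont : ContinuousOn F (Set.Icc a b) := by
    have h1 : ContinuousOn φ (Set.Icc a b) := hcont.mono hsubIcc
    apply ContinuousOn.mul
    · apply ContinuousOn.neg
      apply ContinuousOn.add continuousOn_const
      exact ContinuousOn.div_const (continuousOn_const.add (continuousOn_const.mul (h1.pow 2))) c
    · exact h1.mul (Continuous.continuousOn (by fun_prop))
  have hFint : IntervalIntegrable F volume a b :=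
    (hFcont.mono (by rw [Set.uIcc_of_le hab.le])).intervalIntegrable
  have hFTC : ∫ y in a..b, F y = W b - W a := by
    apply intervalIntegral.integral_eq_sub_of_hasDeriv_right_of_le hab.le hWcont
      (fun x hx => (hW' x hx).hasDerivWithinAt) hFint
  have hWa : W a = 0 := by simp [hW_def, hφa, hψa]
  have hWb : W b = 0 := by simp [hW_def, hφb, hψb]
  have hFzero : ∫ y in a..b, F y = 0 := by rw [hFTC, hWa, hWb, sub_zero]
  -- coefficient positivity
  have hcoef : ∀ x ∈ Set.Ioo a b, 0 < ω ^ 2 + (β - ℏ * lam + g * (φ x) ^ 2) / c := by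
    intro x hx
    have h1 : ℏ * lam - β ≤ c * ω ^ 2 := hkey
    have h2 : 0 < g * (φ x) ^ 2 := by
      have := hnz x hx
      positivity
    have h3 : ω ^ 2 + (β - ℏ * lam + g * (φ x) ^ 2) / c
        = (c * ω ^ 2 + (β - ℏ * lam) + g * (φ x) ^ 2) / c := by field_simp; ring
    rw [h3]
    apply div_pos _ hc
    linarith
  -- sign dichotomy
  set x₀ : ℝ := (a + b) / 2 with hx₀_def
  have hx₀ : x₀ ∈ Set.Ioo a b := by constructor <;> (rw [hx₀_def]; linarith)
  rcases (hnz x₀ hx₀).lt_or_gt with hneg | hpos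
  · -- φ < 0 on Ioo a b, so F > 0, integral > 0
    have hall : ∀ x ∈ Set.Ioo a b, φ x < 0 := by
      intro x hx
      rcases (hnz x hx).lt_or_gt with h | h
      · exact h
      rcases lt_trichotomy x x₀ with hlt | heq | hgt
      · exfalso
        have hIVT := intermediate_value_Ioo' hlt.le
          (hcont.mono ((Set.Icc_subset_Icc hx.1.le hx₀.2.le).trans hsubIcc))
        have h0 : (0:ℝ) ∈ Set.Ioo (φ x₀) (φ x) := ⟨hneg, h⟩
        obtain ⟨z, hz, hz0⟩ := hIVT h0
        exact hnz z ⟨lt_trans hx.1 hz.1, lt_trans hz.2 hx₀.2⟩ hz0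
      · exact absurd (heq ▸ h) (asymm hneg)
      · exfalso
        have hIVT := intermediate_value_Ioo hgt.le
          (hcont.mono ((Set.Icc_subset_Icc hx₀.1.le hx.2.le).trans hsubIcc))
        have h0 : (0:ℝ) ∈ Set.Ioo (φ x₀) (φ x) := ⟨hneg, h⟩
        obtain ⟨z, hz, hz0⟩ := hIVT h0
        exact hnz z ⟨lt_trans hx₀.1 hz.1, lt_trans hz.2 hx.2⟩ hz0
    have hFpos : ∀ x ∈ Set.Ioo a b, 0 < F x := by
      intro x hx
      have h1 := hcoef x hx
      have h2 := hall x hx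
      have h3 := hψpos x hx
      rw [hF_def]
      have : φ x * ψ x < 0 := mul_neg_of_neg_of_pos h2 h3
      nlinarith
    have := intervalIntegral.intervalIntegral_pos_of_pos_on hFint hFpos hab
    linarith [hFzero ▸ this]
  · -- φ > 0 on Ioo a b, so F < 0, integral < 0
    have hall : ∀ x ∈ Set.Ioo a b, 0 < φ x := by
      intro x hx
      rcases (hnz x hx).lt_or_gt with h | h
      swap
      · exact h
      rcases lt_trichotomy x x₀ with hlt | heq | hgt
      · exfalso
        have hIVT := intermediate_value_Ioo hlt.le
          (hcont.mono ((Set.Icc_subset_Icc hx.1.le hx₀.2.le).trans hsubIcc))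
        have h0 : (0:ℝ) ∈ Set.Ioo (φ x) (φ x₀) := ⟨h, hpos⟩
        obtain ⟨z, hz, hz0⟩ := hIVT h0
        exact hnz z ⟨lt_trans hx.1 hz.1, lt_trans hz.2 hx₀.2⟩ hz0
      · exact absurd (heq ▸ h) (asymm hpos)
      · exfalso
        have hIVT := intermediate_value_Ioo' hgt.le
          (hcont.mono ((Set.Icc_subset_Icc hx₀.1.le hx.2.le).trans hsubIcc))
        have h0 : (0:ℝ) ∈ Set.Ioo (φ x) (φ x₀) := ⟨h, hpos⟩
        obtain ⟨z, hz, hz0⟩ := hIVT h0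
        exact hnz z ⟨lt_trans hx₀.1 hz.1, lt_trans hz.2 hx.2⟩ hz0
    have hFneg : ∀ x ∈ Set.Ioo a b, 0 < -F x := by
      intro x hx
      have h1 := hcoef x hx
      have h2 := hall x hx
      have h3 := hψpos x hx
      rw [hF_def]
      have : 0 < φ x * ψ x := mul_pos h2 h3
      nlinarith
    have := intervalIntegral.intervalIntegral_pos_of_pos_on hFint.neg hFneg hab
    simp only [Pi.neg_apply, intervalIntegral.integral_neg, hFzero, neg_zero] at this
    exact lt_irrefl 0 this


/-- quantum states with the nodal pattern of the `k`-th mode occur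
only past the `k`-th quantum critical point. -/
theorem stmt_13 (ℏ m lam L g : ℝ) (hℏ : 0 < ℏ) (hm : 0 < m) (hL : 0 < L)
    (hg : 0 < g) (k : ℕ) (hk : 1 ≤ k) (β : ℝ) (φ : ℝ → ℝ)
    (hsol : IsGPSolution ℏ m lam g 0 L β φ)
    (hC1 : ContDiffOn ℝ 1 φ (Set.Icc 0 L))
    (hne : ∃ x ∈ Set.Icc (0:ℝ) L, φ x ≠ 0)
    (hfin : {x ∈ Set.Ioo (0:ℝ) L | φ x = 0}.Finite)
    (hcard : {x ∈ Set.Ioo (0:ℝ) L | φ x = 0}.ncard = k - 1) :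
    β < betaCrit ℏ m lam L k := by
  obtain ⟨hcont, hC2, hODE, h0, hLz⟩ := hsol
  by_contra hβ
  push_neg at hβ
  obtain ⟨a, b, ha0, hab, hbL, hgapk, hamem, hbmem, hnzZ⟩ :=
    exists_gap L hL k hk {x ∈ Set.Ioo (0:ℝ) L | φ x = 0}
      (fun x hx => hx.1) hfin hcard
  have hφa : φ a = 0 := by
    rcases hamem with h | h
    · exact h ▸ h0
    · exact h.2
  have hφb : φ b = 0 := by
    rcases hbmem with h | h
    · exact h ▸ hLz
    · exact h.2
  have hnz : ∀ x ∈ Set.Ioo a b, φ x ≠ 0 := by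
    intro x hx hx0
    exact hnzZ x hx ⟨Set.Ioo_subset_Ioo ha0 hbL hx, hx0⟩
  have hkpos : (0:ℝ) < k := by exact_mod_cast hk
  have hℓ : 0 < b - a := sub_pos.2 hab
  have hkey : ℏ * lam - β ≤ (ℏ ^ 2 / (4 * m)) * (Real.pi / (b - a)) ^ 2 := by
    have h1 : ℏ * lam - β ≤ (ℏ ^ 2 / (4 * m)) * ((k : ℝ) * Real.pi / L) ^ 2 := by
      unfold betaCrit at hβ; linarith
    have h2 : (k : ℝ) * Real.pi / L ≤ Real.pi / (b - a) := by
      rw [div_le_div_iff₀ hL hℓ]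
      have := Real.pi_pos
      nlinarith
    have h3 : ((k : ℝ) * Real.pi / L) ^ 2 ≤ (Real.pi / (b - a)) ^ 2 := by
      apply pow_le_pow_left₀ _ h2
      positivity
    have hc : (0:ℝ) < ℏ ^ 2 / (4 * m) := by positivity
    nlinarith
  exact sturm_aux ℏ m lam L g hℏ hm hL hg β φ hcont hC2 hODE hC1 a b ha0 hab hbL hφa hφb hnz hkey
end

section
/- Let g > 0 and β < β_1 = ℏλ − (ℏ²/(4m))·(π/L)². Then there exists a GP solution φ on [0,L] with parameter β satisfying φ(x) > 0 for all x ∈ (0,L). (Existence of the positive ground-state quantum state on the first bifurcated branch.) -/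
open Set MeasureTheory intervalIntegral Filter Topology

noncomputable def fI (k t : ℝ) : ℝ := (Real.sqrt (1 - k^2 * Real.sin t ^ 2))⁻¹
noncomputable def EI (k θ : ℝ) : ℝ := ∫ t in (0:ℝ)..θ, fI k t

section
variable {k : ℝ} (hk : k^2 < 1)
include hk

lemma base_pos (t : ℝ) : 0 < 1 - k^2 * Real.sin t ^ 2 := by
  nlinarith [Real.sin_sq_le_one t, sq_nonneg k, sq_nonneg (k * Real.sin t)]

lemma fI_cont : Continuous (fI k) := by
  apply Continuous.inv₀
  · exact (continuous_const.sub (continuous_const.mul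
      ((Real.continuous_sin).pow 2))).sqrt
  · exact fun t => ne_of_gt (Real.sqrt_pos.2 (base_pos hk t))

lemma fI_pos (t : ℝ) : 0 < fI k t :=
  inv_pos.2 (Real.sqrt_pos.2 (base_pos hk t))

lemma fI_ge_one (t : ℝ) : 1 ≤ fI k t := by
  have h1 : Real.sqrt (1 - k^2 * Real.sin t ^ 2) ≤ 1 :=
    Real.sqrt_le_one.2 (by nlinarith [sq_nonneg (k * Real.sin t), sq_nonneg k, Real.sin_sq_le_one t])
  exact (one_le_inv₀ (Real.sqrt_pos.2 (base_pos hk t))).2 h1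

lemma EI_hasDerivAt (θ : ℝ) : HasDerivAt (EI k) (fI k θ) θ :=
  ((fI_cont hk).integral_hasStrictDerivAt 0 θ).hasDerivAt

lemma EI_strictMono : StrictMono (EI k) :=
  strictMono_of_deriv_pos fun θ => by
    rw [(EI_hasDerivAt hk θ).deriv]; exact fI_pos hk θ

lemma EI_continuous : Continuous (EI k) := by
  have h : Differentiable ℝ (EI k) := fun θ => (EI_hasDerivAt hk θ).differentiableAt
  exact h.continuous

omit hk in
lemma EI_zero : EI k 0 = 0 := intervalIntegral.integral_same

lemma EI_ge (θ : ℝ) (h : 0 ≤ θ) : θ ≤ EI k θ := by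
  have h1 : (∫ t in (0:ℝ)..θ, (1:ℝ)) ≤ EI k θ := by
    apply intervalIntegral.integral_mono_on h
      (intervalIntegrable_const) ((fI_cont hk).intervalIntegrable _ _)
    exact fun t _ => fI_ge_one hk t
  simpa using h1

lemma EI_le (θ : ℝ) (h : θ ≤ 0) : EI k θ ≤ θ := by
  have h1 : (∫ t in θ..(0:ℝ), (1:ℝ)) ≤ ∫ t in θ..(0:ℝ), fI k t := by
    apply intervalIntegral.integral_mono_on h
      (intervalIntegrable_const) ((fI_cont hk).intervalIntegrable _ _)
    exact fun t _ => fI_ge_one hk t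
  have h2 : EI k θ = -∫ t in θ..(0:ℝ), fI k t := by
    rw [EI, intervalIntegral.integral_symm]
  simp at h1
  linarith

lemma EI_surj : Function.Surjective (EI k) := by
  intro y
  have h1 : EI k (min y 0) ≤ y := le_trans (EI_le hk _ (min_le_right y 0)) (min_le_left y 0)
  have h2 : y ≤ EI k (max y 0) := le_trans (le_max_left y 0) (EI_ge hk _ (le_max_right y 0))
  obtain ⟨x, _, hx⟩ := intermediate_value_Icc (le_trans (min_le_left y 0) (le_max_left y 0))
    (EI_continuous hk).continuousOn ⟨h1, h2⟩
  exact ⟨x, hx⟩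

end

lemma gp_key {k : ℝ} (hk : k^2 < 1) :
    ∃ s s1 : ℝ → ℝ, ContDiff ℝ 2 s ∧
      (∀ u, HasDerivAt s (s1 u) u) ∧
      (∀ u, HasDerivAt s1 (-(1 + k^2) * s u + 2 * k^2 * s u ^ 3) u) ∧
      s 0 = 0 ∧ s (EI k Real.pi) = 0 ∧
      ∀ u ∈ Set.Ioo 0 (EI k Real.pi), 0 < s u := by
  set gk : ℝ → ℝ := fun θ => Real.sqrt (1 - k^2 * Real.sin θ ^ 2) with hgk_def
  have hgk_pos : ∀ θ, 0 < gk θ := fun θ => Real.sqrt_pos.2 (base_pos hk θ)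
  have hgk_cont : Continuous gk :=
    (continuous_const.sub (continuous_const.mul ((Real.continuous_sin).pow 2))).sqrt
  set iso : ℝ ≃o ℝ := StrictMono.orderIsoOfSurjective (EI k) (EI_strictMono hk) (EI_surj hk)
    with hiso_def
  set am : ℝ → ℝ := fun u => iso.symm u with ham_def
  have hisoe : ∀ θ, iso θ = EI k θ := fun θ => congrFun
    (StrictMono.coe_orderIsoOfSurjective (EI k) (EI_strictMono hk) (EI_surj hk)) θ
  have hamE : ∀ θ, am (EI k θ) = θ := fun θ => by
    rw [ham_def, ← hisoe θ]; exact iso.symm_apply_apply θ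
  have hEam : ∀ u, EI k (am u) = u := fun u => by
    rw [← hisoe (am u)]; exact iso.apply_symm_apply u
  have ham_cont : Continuous am := iso.symm.continuous
  have ham_mono : StrictMono am := iso.symm.strictMono
  have hamd : ∀ u, HasDerivAt am (gk (am u)) u := by
    intro u
    have h := HasDerivAt.of_local_left_inverse ham_cont.continuousAt
      (EI_hasDerivAt hk (am u)) (ne_of_gt (fI_pos hk _))
      (Filter.Eventually.of_forall hEam)
    simpa [fI] using h
  -- derivative of gk
  have hwd : ∀ θ, HasDerivAt (fun θ => 1 - k^2 * Real.sin θ ^ 2)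
      (-(k^2 * (2 * Real.sin θ ^ 1 * Real.cos θ))) θ := by
    intro θ
    have h1 := ((Real.hasDerivAt_sin θ).pow 2).const_mul (k^2)
    have h2 := h1.const_sub 1
    exact h2.congr_deriv (by norm_num)
  have hgkd : ∀ θ, HasDerivAt gk
      (1 / (2 * gk θ) * -(k^2 * (2 * Real.sin θ ^ 1 * Real.cos θ))) θ := by
    intro θ
    exact (Real.hasDerivAt_sqrt (ne_of_gt (base_pos hk θ))).comp θ (hwd θ)
  have hqd : ∀ θ, HasDerivAt (fun θ => Real.cos θ * gk θ)
      (-Real.sin θ * gk θ + Real.cos θ *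
        (1 / (2 * gk θ) * -(k^2 * (2 * Real.sin θ ^ 1 * Real.cos θ)))) θ :=
    fun θ => (Real.hasDerivAt_cos θ).mul (hgkd θ)
  -- the key algebraic identity
  have hid : ∀ θ, (-Real.sin θ * gk θ + Real.cos θ *
        (1 / (2 * gk θ) * -(k^2 * (2 * Real.sin θ ^ 1 * Real.cos θ)))) * gk θ
      = -(1 + k^2) * Real.sin θ + 2 * k^2 * Real.sin θ ^ 3 := by
    intro θ
    have hG2 : gk θ ^ 2 = 1 - k^2 * Real.sin θ ^ 2 := Real.sq_sqrt (base_pos hk θ).le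
    have hcs : Real.sin θ ^ 2 + Real.cos θ ^ 2 = 1 := Real.sin_sq_add_cos_sq θ
    have hGne : gk θ ≠ 0 := ne_of_gt (hgk_pos θ)
    have e : (1 / (2 * gk θ)) * gk θ = 1 / 2 := by
      rw [one_div, mul_inv, mul_assoc, inv_mul_cancel₀ hGne, mul_one, one_div]
    linear_combination (-2*k^2*Real.sin θ*Real.cos θ^2) * e + (-Real.sin θ) * hG2 + (-k^2*Real.sin θ) * hcs
  have hds : ∀ u, HasDerivAt (fun u => Real.sin (am u)) (Real.cos (am u) * gk (am u)) u :=
    fun u => by exact (Real.hasDerivAt_sin (am u)).comp u (hamd u)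
  have hds1 : ∀ u, HasDerivAt (fun u => Real.cos (am u) * gk (am u))
      (-(1 + k^2) * Real.sin (am u) + 2 * k^2 * Real.sin (am u) ^ 3) u := by
    intro u
    have h := (hqd (am u)).comp u (hamd u)
    simp only [Function.comp_def] at h
    rw [hid (am u)] at h
    exact h
  refine ⟨fun u => Real.sin (am u), fun u => Real.cos (am u) * gk (am u), ?_, hds, hds1, ?_, ?_, ?_⟩
  · have hder_s : deriv (fun u => Real.sin (am u)) = fun u => Real.cos (am u) * gk (am u) :=
      funext fun u => (hds u).deriv
    have hder_s1 : deriv (fun u => Real.cos (am u) * gk (am u))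
        = fun u => -(1 + k^2) * Real.sin (am u) + 2 * k^2 * Real.sin (am u) ^ 3 :=
      funext fun u => (hds1 u).deriv
    have hs2cont : Continuous
        (fun u => -(1 + k^2) * Real.sin (am u) + 2 * k^2 * Real.sin (am u) ^ 3) :=
      (continuous_const.mul (Real.continuous_sin.comp ham_cont)).add
        (continuous_const.mul ((Real.continuous_sin.comp ham_cont).pow 3))
    rw [show (2 : WithTop ℕ∞) = 1 + 1 from rfl]
    refine contDiff_succ_iff_deriv.mpr ⟨fun u => (hds u).differentiableAt, by simp, ?_⟩
    rw [hder_s]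
    exact contDiff_one_iff_deriv.mpr ⟨fun u => (hds1 u).differentiableAt,
      by rw [hder_s1]; exact hs2cont⟩
  · have h0 : am 0 = 0 := by have := hamE 0; rwa [EI_zero] at this
    simp [h0]
  · have h0 : am (EI k Real.pi) = Real.pi := hamE _
    simp [h0]
  · intro u hu
    have h1 : 0 < am u := by
      have := ham_mono (show EI k 0 < u by rw [EI_zero]; exact hu.1)
      rwa [hamE] at this
    have h2 : am u < Real.pi := by
      have := ham_mono hu.2
      rwa [hamE] at this
    exact Real.sin_pos_of_pos_of_lt_pi h1 h2

lemma exists_k (T : ℝ) (hT : Real.pi < T) :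
    ∃ k : ℝ, 0 < k ∧ k^2 < 1 ∧ EI k Real.pi * Real.sqrt (1 + k^2) = T := by
  have hπ := Real.pi_pos
  set ε : ℝ := (Real.pi/2) / (Real.exp T - 1) with hε_def
  have hexp : T + 1 ≤ Real.exp T := Real.add_one_le_exp T
  have hden : 0 < Real.exp T - 1 := by nlinarith
  have hε_pos : 0 < ε := by positivity
  have hε_lt1 : ε < 1 := by rw [hε_def, div_lt_one hden]; nlinarith
  set k₁ : ℝ := Real.sqrt (1 - ε^2) with hk₁def
  have hε2 : ε^2 < 1 := by nlinarith
  have hk₁sq : k₁^2 = 1 - ε^2 := Real.sq_sqrt (by nlinarith)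
  have hk₁nonneg : 0 ≤ k₁ := Real.sqrt_nonneg _
  have hk₁lt : k₁^2 < 1 := by nlinarith [sq_nonneg ε]
  set Fc : ℝ → ℝ → ℝ := fun k t => (Real.sqrt (1 - min (k^2) (k₁^2) * Real.sin t ^ 2))⁻¹
    with hFc_def
  have hbase : ∀ p : ℝ × ℝ, 0 < 1 - min (p.1^2) (k₁^2) * Real.sin p.2 ^ 2 := by
    intro p
    have h1 : min (p.1^2) (k₁^2) ≤ k₁^2 := min_le_right _ _
    have h2 : (0:ℝ) ≤ min (p.1^2) (k₁^2) := le_min (sq_nonneg _) (sq_nonneg _)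
    nlinarith [Real.sin_sq_le_one p.2, sq_nonneg (Real.sin p.2)]
  have hFc_cont : Continuous (Function.uncurry Fc) := by
    apply Continuous.inv₀
    · exact (continuous_const.sub (((continuous_fst.pow 2).min continuous_const).mul
        ((Real.continuous_sin.comp continuous_snd).pow 2))).sqrt
    · exact fun p => ne_of_gt (Real.sqrt_pos.2 (hbase p))
  set H : ℝ → ℝ := fun a => (∫ t in Icc (0:ℝ) Real.pi, Fc a t) * Real.sqrt (1 + a^2)
    with hH_def
  have hHcont : Continuous H := by
    rw [hH_def]
    exact (continuous_parametric_integral_of_continuous (μ := volume) hFc_cont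
      isCompact_Icc).mul ((continuous_const.add (continuous_pow 2)).sqrt)
  have hIcc : ∀ a : ℝ, (∫ t in Icc (0:ℝ) Real.pi, Fc a t) = ∫ t in (0:ℝ)..Real.pi, Fc a t := by
    intro a
    rw [intervalIntegral.integral_of_le Real.pi_pos.le, integral_Icc_eq_integral_Ioc]
  have hFc_eq : ∀ a : ℝ, a ∈ Icc (0:ℝ) k₁ → Fc a = fI a := by
    intro a ha
    funext t
    have : min (a^2) (k₁^2) = a^2 := min_eq_left (by nlinarith [ha.1, ha.2])
    rw [hFc_def]
    simp only [this]
    rfl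
  have hH0 : H 0 = Real.pi := by
    have h0 : ∀ t : ℝ, Fc 0 t = 1 := by
      intro t
      rw [hFc_def]
      simp [min_eq_left (sq_nonneg k₁)]
    rw [hH_def]
    simp only [h0]
    simp [Real.volume_Icc, hπ.le]
  -- lower bound at k₁
  have hεeq : Real.sqrt (1 - k₁^2) = ε := by
    rw [hk₁sq]; simp [Real.sqrt_sq hε_pos.le]
  have step1 : ∀ t ∈ Icc (0:ℝ) (Real.pi/2),
      ((ε + Real.pi/2) - t)⁻¹ ≤ fI k₁ t := by
    intro t ht
    have hden2 : 0 < (ε + Real.pi/2) - t := by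
      have := ht.2; linarith
    have hcos_nonneg : 0 ≤ Real.cos t :=
      Real.cos_nonneg_of_mem_Icc ⟨by linarith [ht.1], ht.2⟩
    have hcos_le : Real.cos t ≤ Real.pi/2 - t := by
      have h1 := Real.sin_le (show (0:ℝ) ≤ Real.pi/2 - t by linarith [ht.2])
      rwa [Real.sin_pi_div_two_sub] at h1
    have hb : 1 - k₁^2 * Real.sin t ^ 2 ≤ ((ε + Real.pi/2) - t)^2 := by
      nlinarith [Real.sin_sq_add_cos_sq t, sq_nonneg (Real.cos t), hε_pos, ht.2, ht.1]
    have hsq : Real.sqrt (1 - k₁^2 * Real.sin t ^ 2) ≤ (ε + Real.pi/2) - t := by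
      calc Real.sqrt (1 - k₁^2 * Real.sin t ^ 2)
          ≤ Real.sqrt (((ε + Real.pi/2) - t)^2) := Real.sqrt_le_sqrt hb
        _ = (ε + Real.pi/2) - t := Real.sqrt_sq hden2.le
    exact inv_anti₀ (Real.sqrt_pos.2 (base_pos hk₁lt t)) hsq
  have step2 : (∫ t in (0:ℝ)..(Real.pi/2), ((ε + Real.pi/2) - t)⁻¹) = T := by
    rw [intervalIntegral.integral_comp_sub_left (fun x => x⁻¹) (ε + Real.pi/2)]
    norm_num
    rw [integral_inv_of_pos hε_pos (by linarith)]
    have : (ε + Real.pi/2)/ε = Real.exp T := by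
      rw [hε_def]; field_simp; ring
    rw [this, Real.log_exp]
  have hlow_int : IntervalIntegrable (fun t => ((ε + Real.pi/2) - t)⁻¹) volume 0 (Real.pi/2) := by
    apply ContinuousOn.intervalIntegrable
    apply ContinuousOn.inv₀
    · exact (continuous_const.sub continuous_id).continuousOn
    · intro t ht
      rw [uIcc_of_le (by linarith)] at ht
      exact ne_of_gt (by have := ht.2; linarith)
  have step3 : T ≤ ∫ t in (0:ℝ)..(Real.pi/2), fI k₁ t := by
    rw [← step2]
    exact intervalIntegral.integral_mono_on (by linarith) hlow_int
      ((fI_cont hk₁lt).intervalIntegrable _ _) step1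
  have step4 : (∫ t in (0:ℝ)..(Real.pi/2), fI k₁ t) ≤ EI k₁ Real.pi := by
    have hadd := intervalIntegral.integral_add_adjacent_intervals (μ := volume)
      ((fI_cont hk₁lt).intervalIntegrable 0 (Real.pi/2))
      ((fI_cont hk₁lt).intervalIntegrable (Real.pi/2) Real.pi)
    have h2nd : 0 ≤ ∫ t in (Real.pi/2)..Real.pi, fI k₁ t :=
      intervalIntegral.integral_nonneg (by linarith) (fun t _ => (fI_pos hk₁lt t).le)
    rw [EI, ← hadd]
    linarith
  have hTE : T ≤ EI k₁ Real.pi := le_trans step3 step4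
  have hHk₁ : T ≤ H k₁ := by
    rw [hH_def]
    simp only [hFc_eq k₁ ⟨hk₁nonneg, le_refl _⟩]
    rw [show (∫ t in Icc (0:ℝ) Real.pi, fI k₁ t) = EI k₁ Real.pi by
      rw [EI, intervalIntegral.integral_of_le Real.pi_pos.le, integral_Icc_eq_integral_Ioc]]
    calc T ≤ EI k₁ Real.pi := hTE
      _ = EI k₁ Real.pi * 1 := (mul_one _).symm
      _ ≤ EI k₁ Real.pi * Real.sqrt (1 + k₁^2) := by
          apply mul_le_mul_of_nonneg_left _ (by linarith)
          rw [show (1:ℝ) = Real.sqrt 1 by simp]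
          exact Real.sqrt_le_sqrt (by nlinarith [Real.sqrt_one, sq_nonneg k₁])
  obtain ⟨k, hkmem, hkH⟩ := intermediate_value_Icc hk₁nonneg hHcont.continuousOn
    ⟨by rw [hH0]; exact hT.le, hHk₁⟩
  have hk2 : k^2 < 1 := by
    have : k^2 ≤ k₁^2 := pow_le_pow_left₀ hkmem.1 hkmem.2 2
    linarith
  have hkne : k ≠ 0 := by
    intro h
    rw [h, hH0] at hkH
    exact absurd hkH (ne_of_lt hT)
  refine ⟨k, lt_of_le_of_ne hkmem.1 (Ne.symm hkne), hk2, ?_⟩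
  rw [hH_def] at hkH
  simp only [hFc_eq k hkmem] at hkH
  rw [show (∫ t in Icc (0:ℝ) Real.pi, fI k t) = EI k Real.pi by
    rw [EI, intervalIntegral.integral_of_le Real.pi_pos.le, integral_Icc_eq_integral_Ioc]] at hkH
  exact hkH

/-- existence of the positive ground-state quantum state on the
first bifurcated branch, for `g > 0` and `β < β₁`. -/
theorem stmt_14 (ℏ m lam L g : ℝ) (hℏ : 0 < ℏ) (hm : 0 < m) (hL : 0 < L)
    (hg : 0 < g) (β : ℝ) (hβ : β < betaCrit ℏ m lam L 1) :
    ∃ φ : ℝ → ℝ, IsGPSolution ℏ m lam g 0 L β φ ∧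
      ∀ x ∈ Set.Ioo (0:ℝ) L, 0 < φ x := by
  have hπ := Real.pi_pos
  set A : ℝ := ℏ^2/(4*m) with hA_def
  have hA : 0 < A := by rw [hA_def]; positivity
  set c : ℝ := ℏ*lam - β with hc_def
  have hβ' : β < ℏ*lam - A*(Real.pi/L)^2 := by
    have : betaCrit ℏ m lam L 1 = ℏ*lam - A*(Real.pi/L)^2 := by
      rw [betaCrit, hA_def]; norm_num
    rwa [this] at hβ
  have hcb : A*(Real.pi/L)^2 < c := by rw [hc_def]; linarith
  have hc_pos : 0 < c := lt_trans (by positivity) hcb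
  have hcA : (Real.pi/L)^2 < c/A := by
    rw [lt_div_iff₀ hA]; nlinarith
  set T : ℝ := L * Real.sqrt (c/A) with hT_def
  have hT : Real.pi < T := by
    have h1 : Real.pi/L < Real.sqrt (c/A) := by
      rw [show Real.pi/L = Real.sqrt ((Real.pi/L)^2) from (Real.sqrt_sq (by positivity)).symm]
      exact Real.sqrt_lt_sqrt (by positivity) hcA
    calc Real.pi = L * (Real.pi/L) := by field_simp
      _ < L * Real.sqrt (c/A) := by exact mul_lt_mul_of_pos_left h1 hL
  obtain ⟨k, hk0, hk1, hkT⟩ := exists_k T hT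
  obtain ⟨s, s1, hscd, hds, hds1, hs0, hsπ, hspos⟩ := gp_key hk1
  have hEpos : 0 < EI k Real.pi := by
    have h := EI_strictMono hk1 hπ
    rwa [EI_zero] at h
  set ω : ℝ := EI k Real.pi / L with hω_def
  have hω_pos : 0 < ω := by rw [hω_def]; positivity
  have hωL : ω * L = EI k Real.pi := by rw [hω_def]; field_simp
  have hAω : A * ω^2 * (1 + k^2) = c := by
    have hsq1 : (EI k Real.pi)^2 * (1 + k^2) = T^2 := by
      rw [← hkT, mul_pow, Real.sq_sqrt (by positivity)]
    have hsq2 : A * T^2 = L^2 * c := by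
      rw [hT_def, mul_pow, Real.sq_sqrt (by positivity)]
      field_simp
    have h3 : A * ((EI k Real.pi)^2 * (1 + k^2)) = L^2 * c := by rw [hsq1]; exact hsq2
    rw [hω_def, div_pow]
    have hL2 : L^2 ≠ 0 := by positivity
    field_simp
    linarith [h3]
  set α : ℝ := Real.sqrt (2*A*k^2*ω^2/g) with hα_def
  have hα_pos : 0 < α := Real.sqrt_pos.2 (by positivity)
  have hgα : g * α^2 = 2*A*k^2*ω^2 := by
    rw [hα_def, Real.sq_sqrt (by positivity)]
    field_simp
  have hφcd : ContDiff ℝ 2 (fun x => α * s (ω * x)) :=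
    contDiff_const.mul (hscd.comp (contDiff_const.mul contDiff_id))
  have hlin : ∀ y : ℝ, HasDerivAt (fun y => ω * y) ω y := fun y => by
    simpa using (hasDerivAt_id y).const_mul ω
  refine ⟨fun x => α * s (ω * x), ⟨hφcd.continuous.continuousOn, hφcd.contDiffOn, ?_, ?_, ?_⟩, ?_⟩
  · intro x hx
    have hdφ : ∀ y : ℝ, HasDerivAt (fun y => α * s (ω * y)) (α * (s1 (ω * y) * ω)) y :=
      fun y => ((hds (ω * y)).comp y (hlin y)).const_mul α
    have hderφ : deriv (fun y => α * s (ω * y)) = fun y => α * (s1 (ω * y) * ω) :=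
      funext fun y => (hdφ y).deriv
    have hd2 : HasDerivAt (fun y => α * (s1 (ω * y) * ω))
        (α * ((-(1 + k^2) * s (ω * x) + 2 * k^2 * s (ω * x) ^ 3) * ω * ω)) x :=
      (((hds1 (ω * x)).comp x (hlin x)).mul_const ω).const_mul α
    have hderiv2 : deriv (deriv (fun y => α * s (ω * y))) x
        = α * ((-(1 + k^2) * s (ω * x) + 2 * k^2 * s (ω * x) ^ 3) * ω * ω) := by
      rw [hderφ]; exact hd2.deriv
    rw [hderiv2]
    have hc2 : β - ℏ * lam = -c := by rw [hc_def]; ring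
    rw [hA_def] at hAω hgα
    set σ := s (ω * x) with hσ_def
    rw [hc2]
    linear_combination (α*σ) * hAω + (α*σ^3) * hgα
  · show α * s (ω * 0) = 0
    rw [mul_zero, hs0, mul_zero]
  · show α * s (ω * L) = 0
    rw [hωL, hsπ, mul_zero]
  · intro x hx
    apply mul_pos hα_pos
    apply hspos
    constructor
    · exact mul_pos hω_pos hx.1
    · have := mul_lt_mul_of_pos_left hx.2 hω_pos
      rwa [hωL] at this
end

section
/- Let g ∈ ℝ, let β : [0,1] → ℝ be continuous, and let Φ : [0,1] × [0,L] → ℝ be such that Φ and its partial derivative ∂Φ/∂x are continuous on [0,1] × [0,L], and for every t ∈ [0,1] the function Φ(t,·) is a GP solution on [0,L] with parameter β(t) that is not identically zero. Then each Φ(t,·) has only finitely many interior zeros, and the number of interior zeros of Φ(0,·) equals the number of interior zeros of Φ(1,·). (Invariance of the nodal count along a continuous family of nonzero stationary states; this is the mechanism behind Theorem 4.2(1), that branches bifurcating from distinct critical points β_i and β_j cannot be deformed into one another and hence do not intersect.) -/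
open Set MeasureTheory intervalIntegral Filter Topology

/-- Grönwall helper: two-sided exponential bound from `|f'| ≤ K·|f|`. -/
lemma my_gron {f F : ℝ → ℝ} {K a b : ℝ} (hK : 0 ≤ K) (hab : a ≤ b)
    (hf : ContinuousOn f (Icc a b))
    (hf' : ∀ x ∈ Icc a b, HasDerivAt f (F x) x)
    (hb : ∀ x ∈ Icc a b, |F x| ≤ K * |f x|) :
    |f b| ≤ |f a| * Real.exp (K * (b - a)) ∧
      |f a| ≤ |f b| * Real.exp (K * (b - a)) := by
  constructor
  · have := norm_le_gronwallBound_of_norm_deriv_right_le (f := f) (f' := F)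
      (δ := ‖f a‖) (K := K) (ε := 0) (a := a) (b := b) hf
      (fun x hx => (hf' x (Ico_subset_Icc_self hx)).hasDerivWithinAt)
      le_rfl
      (fun x hx => by
        simpa using hb x (Ico_subset_Icc_self hx))
    have h2 := this b ⟨hab, le_rfl⟩
    rwa [gronwallBound_ε0, Real.norm_eq_abs, Real.norm_eq_abs] at h2
  · set g : ℝ → ℝ := fun x => f (a + b - x) with hg
    have hmap : ∀ x ∈ Icc a b, a + b - x ∈ Icc a b := by
      intro x hx; obtain ⟨h1, h2⟩ := hx; exact ⟨by linarith, by linarith⟩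
    have hgc : ContinuousOn g (Icc a b) := by
      apply hf.comp (Continuous.continuousOn (by continuity)) hmap
    have hg' : ∀ x ∈ Icc a b, HasDerivAt g (-(F (a + b - x))) x := by
      intro x hx
      have h1 : HasDerivAt (fun x : ℝ => a + b - x) (-1) x := by
        simpa using (hasDerivAt_id x).const_sub (a + b)
      have := (hf' (a + b - x) (hmap x hx)).comp x h1
      rw [show -(F (a + b - x)) = F (a + b - x) * -1 by ring]; exact this
    have := norm_le_gronwallBound_of_norm_deriv_right_le (f := g)
      (f' := fun x => -(F (a + b - x)))
      (δ := ‖g a‖) (K := K) (ε := 0) (a := a) (b := b) hgc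
      (fun x hx => (hg' x (Ico_subset_Icc_self hx)).hasDerivWithinAt)
      le_rfl
      (fun x hx => by
        simpa using hb _ (hmap x (Ico_subset_Icc_self hx)))
    have h2 := this b ⟨hab, le_rfl⟩
    rw [gronwallBound_ε0, Real.norm_eq_abs, Real.norm_eq_abs] at h2
    simpa [hg] using h2

/-- Uniqueness: a GP solution whose value and derivative both vanish somewhere is identically 0. -/
lemma GP_unique {ℏ m lam g L b : ℝ} (hℏ : 0 < ℏ) (hm : 0 < m) (hL : 0 < L) {φ : ℝ → ℝ}
    (hsol : IsGPSolution ℏ m lam g 0 L b φ)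
    (hdc : ContinuousOn (deriv φ) (Icc 0 L))
    {x0 : ℝ} (hx0 : x0 ∈ Icc 0 L) (h0 : φ x0 = 0) (h0' : deriv φ x0 = 0) :
    ∀ x ∈ Icc 0 L, φ x = 0 := by
  obtain ⟨hc, hd2, hode, hφ0, hφL⟩ := hsol
  set c : ℝ := 4 * m / ℏ ^ 2 with hcdef
  have hcpos : 0 < c := by positivity
  -- rewrite the ODE
  have hode' : ∀ x ∈ Ioo (0:ℝ) L, deriv (deriv φ) x
      = c * ((b - ℏ * lam) * φ x + g * φ x ^ 3) := by
    intro x hx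
    have h := hode x hx
    have hne : (ℏ:ℝ) ^ 2 / (4 * m) ≠ 0 := by positivity
    field_simp [hcdef] at h ⊢
    have hc' : c * ℏ ^ 2 = 4 * m := by rw [hcdef]; field_simp
    have hℏ2 : ℏ ^ 2 ≠ 0 := by positivity
    have key : deriv (deriv φ) x * ℏ ^ 2 = φ x * c * (b - ℏ * lam + φ x ^ 2 * g) * ℏ ^ 2 := by
      linear_combination (-1) * h - φ x * (b - ℏ * lam + φ x ^ 2 * g) * hc'
    have key2 := mul_right_cancel₀ hℏ2 key
    linarith [key2]
  -- first derivative exists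
  have hder1 : ∀ x ∈ Ioo (0:ℝ) L, HasDerivAt φ (deriv φ x) x := by
    intro x hx
    exact ((hd2.differentiableOn (by norm_num)).differentiableAt
      (isOpen_Ioo.mem_nhds hx)).hasDerivAt
  have hder2 : ∀ x ∈ Ioo (0:ℝ) L, HasDerivAt (deriv φ) (deriv (deriv φ) x) x := by
    intro x hx
    have : ContDiffOn ℝ 1 (deriv φ) (Ioo 0 L) :=
      hd2.deriv_of_isOpen isOpen_Ioo (by norm_num)
    exact ((this.differentiableOn (by norm_num)).differentiableAt
      (isOpen_Ioo.mem_nhds hx)).hasDerivAt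
  -- energy function
  set f : ℝ → ℝ := fun x => φ x ^ 2 + deriv φ x ^ 2 with hfdef
  have hfc : ContinuousOn f (Icc 0 L) := (hc.pow 2).add (hdc.pow 2)
  have hfnonneg : ∀ x, 0 ≤ f x := fun x => by positivity
  set F : ℝ → ℝ := fun x => 2 * φ x * deriv φ x + 2 * deriv φ x * deriv (deriv φ) x with hFdef
  have hfder : ∀ x ∈ Ioo (0:ℝ) L, HasDerivAt f (F x) x := by
    intro x hx
    have h1 := ((hder1 x hx).pow 2)
    have h2 := ((hder2 x hx).pow 2)
    have h3 := h1.add h2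
    have : HasDerivAt (fun x => φ x ^ 2 + deriv φ x ^ 2) (F x) x := by
      convert h3 using 1
      show 2 * φ x * deriv φ x + 2 * deriv φ x * deriv (deriv φ) x = _
      norm_num <;> ring
      all_goals rfl
    exact this
  -- bound on |φ|
  obtain ⟨M, hM⟩ := isCompact_Icc.exists_bound_of_continuousOn hc
  have hM0 : 0 ≤ M := le_trans (norm_nonneg _) (hM 0 ⟨le_rfl, hL.le⟩)
  set K : ℝ := 2 + 2 * c * |b - ℏ * lam| + 2 * c * |g| * M ^ 2 with hKdef
  have hK0 : 0 ≤ K := by positivity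
  have hbound : ∀ x ∈ Ioo (0:ℝ) L, |F x| ≤ K * |f x| := by
    intro x hx
    have hMx : |φ x| ≤ M := by simpa using hM x (Ioo_subset_Icc_self hx)
    have hfx : f x = φ x ^ 2 + deriv φ x ^ 2 := rfl
    have hFx : F x = (2 + 2 * c * (b - ℏ * lam)) * (φ x * deriv φ x)
        + 2 * c * g * (φ x ^ 3 * deriv φ x) := by
      show 2 * φ x * deriv φ x + 2 * deriv φ x * deriv (deriv φ) x = _
      rw [hode' x hx]; ring
    have habs : |φ x * deriv φ x| ≤ f x := by
      rw [hfx, abs_mul]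
      nlinarith [sq_nonneg (|φ x| - |deriv φ x|), sq_abs (φ x), sq_abs (deriv φ x),
        abs_nonneg (φ x), abs_nonneg (deriv φ x), mul_nonneg (abs_nonneg (φ x)) (abs_nonneg (deriv φ x))]
    have habs3 : |φ x ^ 3 * deriv φ x| ≤ M ^ 2 * f x := by
      have e : φ x ^ 3 * deriv φ x = φ x ^ 2 * (φ x * deriv φ x) := by ring
      rw [e, abs_mul, abs_of_nonneg (sq_nonneg (φ x))]
      have h2 : φ x ^ 2 ≤ M ^ 2 := by nlinarith [sq_abs (φ x), abs_nonneg (φ x), hMx]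
      exact mul_le_mul h2 habs (abs_nonneg _) (by positivity)
    have eA : |(2 + 2 * c * (b - ℏ * lam))| ≤ 2 + 2 * c * |b - ℏ * lam| := by
      refine le_trans (abs_add_le 2 _) ?_
      rw [abs_two, abs_mul, abs_of_nonneg (by positivity : (0:ℝ) ≤ 2 * c)]
    have h1 : |(2 + 2 * c * (b - ℏ * lam)) * (φ x * deriv φ x)|
        ≤ (2 + 2 * c * |b - ℏ * lam|) * f x := by
      rw [abs_mul]
      exact mul_le_mul eA habs (abs_nonneg _) (by positivity)
    have h2 : |2 * c * g * (φ x ^ 3 * deriv φ x)| ≤ 2 * c * |g| * (M ^ 2 * f x) := by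
      rw [abs_mul]
      have : |2 * c * g| = 2 * c * |g| := by
        rw [abs_mul, abs_of_nonneg (by positivity : (0:ℝ) ≤ 2 * c)]
      rw [this]
      exact mul_le_mul_of_nonneg_left habs3 (by positivity)
    rw [abs_of_nonneg (hfnonneg x), hFx]
    calc |(2 + 2 * c * (b - ℏ * lam)) * (φ x * deriv φ x)
        + 2 * c * g * (φ x ^ 3 * deriv φ x)|
        ≤ (2 + 2 * c * |b - ℏ * lam|) * f x + 2 * c * |g| * (M ^ 2 * f x) :=
          le_trans (abs_add_le _ _) (add_le_add h1 h2)
      _ = K * f x := by rw [hKdef]; ring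
  -- two-sided Gronwall estimate between interior points
  have key : ∀ a y : ℝ, a ∈ Ioo (0:ℝ) L → y ∈ Ioo (0:ℝ) L →
      |f y| ≤ |f a| * Real.exp (K * L) := by
    intro a y ha hy
    rcases le_total a y with h | h
    · have hsub : Icc a y ⊆ Ioo (0:ℝ) L := Icc_subset_Ioo ha.1 hy.2
      have hg := (my_gron hK0 h (hfc.mono (hsub.trans Ioo_subset_Icc_self))
        (fun x hx => hfder x (hsub hx)) (fun x hx => hbound x (hsub hx))).1
      refine hg.trans (mul_le_mul_of_nonneg_left ?_ (abs_nonneg _))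
      refine Real.exp_le_exp.2 ?_
      have : y - a ≤ L := by linarith [ha.1, hy.2]
      nlinarith
    · have hsub : Icc y a ⊆ Ioo (0:ℝ) L := Icc_subset_Ioo hy.1 ha.2
      have hg := (my_gron hK0 h (hfc.mono (hsub.trans Ioo_subset_Icc_self))
        (fun x hx => hfder x (hsub hx)) (fun x hx => hbound x (hsub hx))).2
      refine hg.trans (mul_le_mul_of_nonneg_left ?_ (abs_nonneg _))
      refine Real.exp_le_exp.2 ?_
      have : a - y ≤ L := by linarith [hy.1, ha.2]
      nlinarith
  have hfx0 : f x0 = 0 := by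
    show φ x0 ^ 2 + deriv φ x0 ^ 2 = 0
    rw [h0, h0']; ring
  have hfIoo : ∀ y ∈ Ioo (0:ℝ) L, f y = 0 := by
    intro y hy
    have hykey : |f y| ≤ 0 := by
      rcases eq_or_lt_of_le hx0.1 with h0eq | hx0pos
      · -- x0 = 0
        have hf00 : f (0:ℝ) = 0 := by rw [← h0eq] at hfx0; exact hfx0
        have hclos : (0:ℝ) ∈ closure (Ioo (0:ℝ) y) := by
          rw [closure_Ioo (ne_of_lt hy.1)]; exact ⟨le_rfl, hy.1.le⟩
        have hnb : (𝓝[Ioo (0:ℝ) y] (0:ℝ)).NeBot :=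
          mem_closure_iff_nhdsWithin_neBot.mp hclos
        have hcw : ContinuousWithinAt f (Icc 0 L) 0 := hfc 0 ⟨le_rfl, hL.le⟩
        have htf : Tendsto f (𝓝[Ioo (0:ℝ) y] 0) (𝓝 (f 0)) := by
          refine hcw.tendsto.mono_left (nhdsWithin_mono 0 ?_)
          intro z hz; exact ⟨hz.1.le, le_trans hz.2.le hy.2.le⟩
        have htend : Tendsto (fun a => |f a| * Real.exp (K * L)) (𝓝[Ioo (0:ℝ) y] 0)
            (𝓝 (|f 0| * Real.exp (K * L))) := (htf.abs).mul_const _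
        have hev : ∀ᶠ a in 𝓝[Ioo (0:ℝ) y] (0:ℝ), |f y| ≤ |f a| * Real.exp (K * L) := by
          filter_upwards [self_mem_nhdsWithin] with a ha
          exact key a y ⟨ha.1, lt_trans ha.2 hy.2⟩ hy
        have hfin := ge_of_tendsto htend hev
        rw [hf00] at hfin; simpa using hfin
      rcases eq_or_lt_of_le hx0.2 with hLeq | hx0lt
      · -- x0 = L
        have hf00 : f L = 0 := by rw [← hLeq]; exact hfx0
        have hclos : L ∈ closure (Ioo y L) := by
          rw [closure_Ioo (ne_of_lt hy.2)]; exact ⟨hy.2.le, le_rfl⟩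
        have hnb : (𝓝[Ioo y L] L).NeBot := mem_closure_iff_nhdsWithin_neBot.mp hclos
        have hcw : ContinuousWithinAt f (Icc 0 L) L := hfc L ⟨hL.le, le_rfl⟩
        have htf : Tendsto f (𝓝[Ioo y L] L) (𝓝 (f L)) := by
          refine hcw.tendsto.mono_left (nhdsWithin_mono L ?_)
          intro z hz; exact ⟨le_trans hy.1.le hz.1.le, hz.2.le⟩
        have htend : Tendsto (fun a => |f a| * Real.exp (K * L)) (𝓝[Ioo y L] L)
            (𝓝 (|f L| * Real.exp (K * L))) := (htf.abs).mul_const _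
        have hev : ∀ᶠ a in 𝓝[Ioo y L] L, |f y| ≤ |f a| * Real.exp (K * L) := by
          filter_upwards [self_mem_nhdsWithin] with a ha
          exact key a y ⟨lt_trans hy.1 ha.1, ha.2⟩ hy
        have hfin := ge_of_tendsto htend hev
        rw [hf00] at hfin; simpa using hfin
      · -- x0 interior
        have := key x0 y ⟨hx0pos, hx0lt⟩ hy
        rw [hfx0] at this; simpa using this
    have h1 := le_abs_self (f y)
    have h2 := hfnonneg y
    linarith
  intro x hxI
  rcases eq_or_lt_of_le hxI.1 with h | h
  · rw [← h]; exact hφ0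
  rcases eq_or_lt_of_le hxI.2 with h2 | h2
  · rw [h2]; exact hφL
  · have hfy := hfIoo x ⟨h, h2⟩
    have hsq : φ x ^ 2 + deriv φ x ^ 2 = 0 := hfy
    have h4 := sq_nonneg (φ x)
    have h5 := sq_nonneg (deriv φ x)
    have h6 : φ x ^ 2 = 0 := by linarith
    exact (pow_eq_zero_iff two_ne_zero).mp h6

/-- Simple zeros. -/
lemma GP_simple {ℏ m lam g L b : ℝ} (hℏ : 0 < ℏ) (hm : 0 < m) (hL : 0 < L) {φ : ℝ → ℝ}
    (hsol : IsGPSolution ℏ m lam g 0 L b φ)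
    (hdc : ContinuousOn (deriv φ) (Icc 0 L))
    (hnz : ∃ x ∈ Icc (0:ℝ) L, φ x ≠ 0) :
    ∀ x ∈ Icc (0:ℝ) L, φ x = 0 → deriv φ x ≠ 0 := by
  intro x hx hφx hdx
  obtain ⟨y, hy, hyne⟩ := hnz
  exact hyne (GP_unique hℏ hm hL hsol hdc hx hφx hdx y hy)

/-- Finitely many interior zeros. -/
lemma GP_finite {ℏ m lam g L b : ℝ} (hℏ : 0 < ℏ) (hm : 0 < m) (hL : 0 < L) {φ : ℝ → ℝ}
    (hsol : IsGPSolution ℏ m lam g 0 L b φ)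
    (hdc : ContinuousOn (deriv φ) (Icc 0 L))
    (hnz : ∃ x ∈ Icc (0:ℝ) L, φ x ≠ 0) :
    {x ∈ Ioo (0:ℝ) L | φ x = 0}.Finite := by
  obtain ⟨hc, hd2, hode, hφ0, hφL⟩ := hsol
  by_contra hinf
  set Z := {x ∈ Ioo (0:ℝ) L | φ x = 0} with hZdef
  have hZsub : Z ⊆ Icc 0 L := fun x hx => Ioo_subset_Icc_self hx.1
  obtain ⟨xs, hxsK, hacc⟩ :=
    Set.Infinite.exists_accPt_of_subset_isCompact hinf isCompact_Icc hZsub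
  have hfreq : ∃ᶠ y in 𝓝 xs, y ≠ xs ∧ y ∈ Z := accPt_iff_frequently.mp hacc
  have hzero : ∀ x ∈ Icc (0:ℝ) L, φ x = 0 := by
    rcases eq_or_lt_of_le hxsK.1 with h0eq | hpos
    · -- xs = 0 : Rolle argument
      have hroll : ∀ ε > (0:ℝ), ∃ cc, cc ∈ Ioo (0:ℝ) L ∧ cc < ε ∧ deriv φ cc = 0 := by
        intro ε hε
        have hball : ∀ δ > (0:ℝ), ∃ y, y ∈ Z ∧ y < δ := by
          intro δ hδ
          have : ∀ᶠ y in 𝓝 xs, |y - xs| < δ := by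
            have := Metric.ball_mem_nhds xs hδ
            filter_upwards [this] with y hy
            simpa [Real.dist_eq] using hy
          obtain ⟨y, ⟨hy1, hy3⟩, hy2⟩ := (hfreq.and_eventually this).exists
          refine ⟨y, hy3, ?_⟩
          have habs : |y| < δ := by rw [← h0eq] at hy2; simpa using hy2
          exact lt_of_le_of_lt (le_abs_self y) habs
        obtain ⟨y1, hy1Z, hy1ε⟩ := hball ε hε
        obtain ⟨y2, hy2Z, hy2lt⟩ := hball y1 hy1Z.1.1
        have hlt : y2 < y1 := hy2lt
        have hcont : ContinuousOn φ (Icc y2 y1) :=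
          hd2.continuousOn.mono (Icc_subset_Ioo hy2Z.1.1 hy1Z.1.2)
        obtain ⟨cc, hcc, hccd⟩ := exists_deriv_eq_zero hlt hcont (by rw [hy2Z.2, hy1Z.2])
        refine ⟨cc, ⟨lt_trans hy2Z.1.1 hcc.1, lt_trans hcc.2 hy1Z.1.2⟩,
          lt_trans hcc.2 hy1ε, hccd⟩
      have hseq : ∀ n : ℕ, ∃ cc, cc ∈ Ioo (0:ℝ) L ∧ cc < 1/(n+1) ∧ deriv φ cc = 0 :=
        fun n => hroll _ (by positivity)
      choose u hu1 hu2 hu3 using hseq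
      have htu : Tendsto u atTop (𝓝 0) := by
        refine squeeze_zero (fun n => (hu1 n).1.le) (fun n => (hu2 n).le) ?_
        exact tendsto_one_div_add_atTop_nhds_zero_nat
      have htuw : Tendsto u atTop (𝓝[Icc (0:ℝ) L] 0) :=
        tendsto_nhdsWithin_of_tendsto_nhds_of_eventually_within u htu
          (Eventually.of_forall fun n => Ioo_subset_Icc_self (hu1 n))
      have hcomp : Tendsto (fun n => deriv φ (u n)) atTop (𝓝 (deriv φ 0)) :=
        ((hdc 0 ⟨le_rfl, hL.le⟩).tendsto).comp htuw
      have : (fun n => deriv φ (u n)) = fun _ => (0:ℝ) := funext hu3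
      rw [this] at hcomp
      have hd00 : deriv φ 0 = 0 := (tendsto_nhds_unique tendsto_const_nhds hcomp).symm
      exact GP_unique hℏ hm hL ⟨hc, hd2, hode, hφ0, hφL⟩ hdc
        ⟨le_rfl, hL.le⟩ hφ0 hd00
    rcases eq_or_lt_of_le hxsK.2 with hLeq | hlt
    · -- xs = L : Rolle argument
      have hroll : ∀ ε > (0:ℝ), ∃ cc, cc ∈ Ioo (0:ℝ) L ∧ L - ε < cc ∧ deriv φ cc = 0 := by
        intro ε hε
        have hball : ∀ δ > (0:ℝ), ∃ y, y ∈ Z ∧ L - δ < y := by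
          intro δ hδ
          have : ∀ᶠ y in 𝓝 xs, |y - xs| < δ := by
            have := Metric.ball_mem_nhds xs hδ
            filter_upwards [this] with y hy
            simpa [Real.dist_eq] using hy
          obtain ⟨y, ⟨hy1, hy3⟩, hy2⟩ := (hfreq.and_eventually this).exists
          refine ⟨y, hy3, ?_⟩
          rw [hLeq] at hy2
          have := abs_lt.mp hy2
          linarith [this.1]
        obtain ⟨y1, hy1Z, hy1ε⟩ := hball ε hε
        obtain ⟨y2, hy2Z, hy2lt⟩ := hball (L - y1) (by linarith [hy1Z.1.2])
        have hlt2 : y1 < y2 := by linarith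
        have hcont : ContinuousOn φ (Icc y1 y2) :=
          hd2.continuousOn.mono (Icc_subset_Ioo hy1Z.1.1 hy2Z.1.2)
        obtain ⟨cc, hcc, hccd⟩ := exists_deriv_eq_zero hlt2 hcont (by rw [hy2Z.2, hy1Z.2])
        refine ⟨cc, ⟨lt_trans hy1Z.1.1 hcc.1, lt_trans hcc.2 hy2Z.1.2⟩, by linarith [hcc.1], hccd⟩
      have hseq : ∀ n : ℕ, ∃ cc, cc ∈ Ioo (0:ℝ) L ∧ L - 1/(n+1) < cc ∧ deriv φ cc = 0 :=
        fun n => hroll _ (by positivity)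
      choose u hu1 hu2 hu3 using hseq
      have htu : Tendsto u atTop (𝓝 L) := by
        have hlow : Tendsto (fun n : ℕ => L - 1/((n:ℝ)+1)) atTop (𝓝 L) := by
          have := tendsto_one_div_add_atTop_nhds_zero_nat (𝕜 := ℝ)
          have h2 := tendsto_const_nhds (x := L) (f := atTop (α := ℕ)) |>.sub this
          simpa using h2
        refine tendsto_of_tendsto_of_tendsto_of_le_of_le hlow tendsto_const_nhds
          (fun n => (hu2 n).le) (fun n => (hu1 n).2.le)
      have htuw : Tendsto u atTop (𝓝[Icc (0:ℝ) L] L) :=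
        tendsto_nhdsWithin_of_tendsto_nhds_of_eventually_within u htu
          (Eventually.of_forall fun n => Ioo_subset_Icc_self (hu1 n))
      have hcomp : Tendsto (fun n => deriv φ (u n)) atTop (𝓝 (deriv φ L)) :=
        ((hdc L ⟨hL.le, le_rfl⟩).tendsto).comp htuw
      have : (fun n => deriv φ (u n)) = fun _ => (0:ℝ) := funext hu3
      rw [this] at hcomp
      have hdL0 : deriv φ L = 0 := (tendsto_nhds_unique tendsto_const_nhds hcomp).symm
      exact GP_unique hℏ hm hL ⟨hc, hd2, hode, hφ0, hφL⟩ hdc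
        ⟨hL.le, le_rfl⟩ hφL hdL0
    · -- xs interior
      have hxsIoo : xs ∈ Ioo (0:ℝ) L := ⟨hpos, hlt⟩
      have hder : HasDerivAt φ (deriv φ xs) xs :=
        ((hd2.differentiableOn (by norm_num)).differentiableAt
          (isOpen_Ioo.mem_nhds hxsIoo)).hasDerivAt
      have hcontAt : ContinuousAt φ xs := hder.continuousAt
      have hfreq' : ∃ᶠ y in 𝓝[≠] xs, y ∈ Z := by
        rw [frequently_nhdsWithin_iff]
        exact hfreq.mono fun y hy => ⟨hy.2, hy.1⟩
      have hφxs : φ xs = 0 := by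
        by_contra hne0
        have hev : ∀ᶠ y in 𝓝 xs, φ y ≠ 0 := hcontAt.eventually_ne hne0
        have hev' : ∀ᶠ y in 𝓝[≠] xs, φ y ≠ 0 := hev.filter_mono nhdsWithin_le_nhds
        obtain ⟨y, hy1, hy2⟩ := (hfreq'.and_eventually hev').exists
        exact hy2 hy1.2
      have hdxs : deriv φ xs = 0 := by
        by_contra hd0
        have hslope : Tendsto (slope φ xs) (𝓝[≠] xs) (𝓝 (deriv φ xs)) :=
          hasDerivAt_iff_tendsto_slope.mp hder
        have hev : ∀ᶠ y in 𝓝[≠] xs, slope φ xs y ≠ 0 := hslope.eventually_ne hd0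
        obtain ⟨y, hy1, hy2⟩ := (hfreq'.and_eventually hev).exists
        apply hy2
        rw [slope_def_field, hy1.2, hφxs]
        simp
      exact GP_unique hℏ hm hL ⟨hc, hd2, hode, hφ0, hφL⟩ hdc
        (Ioo_subset_Icc_self hxsIoo) hφxs hdxs
  obtain ⟨y, hy, hyne⟩ := hnz
  exact hyne (hzero y hy)

lemma GP_local_const (ℏ m lam L g : ℝ) (hℏ : 0 < ℏ) (hm : 0 < m) (hL : 0 < L)
    (β : ℝ → ℝ) (Φ : ℝ → ℝ → ℝ)
    (hΦcont : ContinuousOn (fun p : ℝ × ℝ => Φ p.1 p.2)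
      (Set.Icc (0:ℝ) 1 ×ˢ Set.Icc (0:ℝ) L))
    (hΦderiv : ContinuousOn (fun p : ℝ × ℝ => deriv (Φ p.1) p.2)
      (Set.Icc (0:ℝ) 1 ×ˢ Set.Icc (0:ℝ) L))
    (hsol : ∀ t ∈ Set.Icc (0:ℝ) 1, IsGPSolution ℏ m lam g 0 L (β t) (Φ t))
    (hne : ∀ t ∈ Set.Icc (0:ℝ) 1, ∃ x ∈ Set.Icc (0:ℝ) L, Φ t x ≠ 0)
    (t : ℝ) (ht : t ∈ Icc (0:ℝ) 1) :
    ∃ δ > 0, ∀ s ∈ Icc (0:ℝ) 1, dist s t < δ →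
      {x ∈ Ioo (0:ℝ) L | Φ s x = 0}.ncard = {x ∈ Ioo (0:ℝ) L | Φ t x = 0}.ncard := by
  -- slices
  have hslice : ∀ s ∈ Icc (0:ℝ) 1, ContinuousOn (Φ s) (Icc 0 L) := by
    intro s hs
    have hc2 : Continuous fun x : ℝ => ((s, x) : ℝ × ℝ) := by fun_prop
    exact hΦcont.comp hc2.continuousOn (fun x hx => ⟨hs, hx⟩)
  have hdslice : ∀ s ∈ Icc (0:ℝ) 1, ContinuousOn (deriv (Φ s)) (Icc 0 L) := by
    intro s hs
    have hc2 : Continuous fun x : ℝ => ((s, x) : ℝ × ℝ) := by fun_prop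
    exact hΦderiv.comp hc2.continuousOn (fun x hx => ⟨hs, hx⟩)
  -- zero sets
  set Zi : ℝ → Set ℝ := fun s => {x ∈ Ioo (0:ℝ) L | Φ s x = 0} with hZidef
  set Zt : Set ℝ := {x ∈ Icc (0:ℝ) L | Φ t x = 0} with hZtdef
  have hZifin : ∀ s ∈ Icc (0:ℝ) 1, (Zi s).Finite := fun s hs =>
    GP_finite hℏ hm hL (hsol s hs) (hdslice s hs) (hne s hs)
  have hΦt0 : Φ t 0 = 0 := (hsol t ht).2.2.2.1
  have hΦtL : Φ t L = 0 := (hsol t ht).2.2.2.2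
  have h0Zt : (0:ℝ) ∈ Zt := ⟨⟨le_rfl, hL.le⟩, hΦt0⟩
  have hLZt : L ∈ Zt := ⟨⟨hL.le, le_rfl⟩, hΦtL⟩
  have hZtsub : Zt ⊆ insert 0 (insert L (Zi t)) := by
    intro x hx
    rcases eq_or_lt_of_le hx.1.1 with h | h
    · exact Or.inl h.symm
    rcases eq_or_lt_of_le hx.1.2 with h2 | h2
    · exact Or.inr (Or.inl h2)
    · exact Or.inr (Or.inr ⟨⟨h, h2⟩, hx.2⟩)
  have hZtfin : Zt.Finite :=
    Set.Finite.subset (((hZifin t ht).insert L).insert 0) hZtsub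
  have hZtIcc : Zt ⊆ Icc (0:ℝ) L := fun x hx => hx.1
  -- simple zeros for t
  have hsimp : ∀ z ∈ Zt, deriv (Φ t) z ≠ 0 := fun z hz =>
    GP_simple hℏ hm hL (hsol t ht) (hdslice t ht) (hne t ht) z hz.1 hz.2
  -- separation constant
  obtain ⟨ε1, hε1pos, hsep⟩ : ∃ ε1 > 0, ∀ z ∈ Zt, ∀ z' ∈ Zt, z ≠ z' → 2 * ε1 < |z - z'| := by
    set D : Set ℝ := (fun p : ℝ × ℝ => |p.1 - p.2|) '' ((Zt ×ˢ Zt) ∩ {p | p.1 ≠ p.2}) with hDdef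
    have hDfin : D.Finite := (((hZtfin.prod hZtfin).inter_of_left _).image _)
    have hDne : D.Nonempty := ⟨|(0:ℝ) - L|, ⟨(0, L), ⟨⟨h0Zt, hLZt⟩, by simp [hL.ne]⟩, rfl⟩⟩
    obtain ⟨d0, hd0D, hd0min⟩ := Set.exists_min_image D id hDfin hDne
    have hd0pos : 0 < d0 := by
      obtain ⟨⟨z, z'⟩, ⟨⟨hz, hz'⟩, hne'⟩, heq⟩ := hd0D
      rw [← heq]
      exact abs_pos.mpr (sub_ne_zero.mpr hne')
    refine ⟨d0 / 4, by linarith, ?_⟩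
    intro z hz z' hz' hne'
    have : d0 ≤ |z - z'| := hd0min _ ⟨(z, z'), ⟨⟨hz, hz'⟩, hne'⟩, rfl⟩
    linarith
  -- min derivative constant
  obtain ⟨c, hcpos, hcmin⟩ : ∃ c > 0, ∀ z ∈ Zt, c ≤ |deriv (Φ t) z| := by
    obtain ⟨z0, hz0, hz0min⟩ := Set.exists_min_image Zt (fun z => |deriv (Φ t) z|)
      hZtfin ⟨0, h0Zt⟩
    exact ⟨|deriv (Φ t) z0|, abs_pos.mpr (hsimp z0 hz0), hz0min⟩
  -- uniform continuity moduli
  set P : Set (ℝ × ℝ) := Icc (0:ℝ) 1 ×ˢ Icc (0:ℝ) L with hPdef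
  have hPcomp : IsCompact P := isCompact_Icc.prod isCompact_Icc
  obtain ⟨δ1, hδ1pos, hUC1⟩ : ∃ δ1 > 0, ∀ p ∈ P, ∀ q ∈ P, dist p q < δ1 →
      |deriv (Φ p.1) p.2 - deriv (Φ q.1) q.2| < c / 2 := by
    have := (hPcomp.uniformContinuousOn_of_continuous hΦderiv)
    rw [Metric.uniformContinuousOn_iff] at this
    obtain ⟨δ1, hδ1, h⟩ := this (c / 2) (by linarith)
    exact ⟨δ1, hδ1, fun p hp q hq hd => by
      have := h p hp q hq hd; rwa [Real.dist_eq] at this⟩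
  -- epsilon
  set ε : ℝ := min ε1 (δ1 / 2) with hεdef
  have hεpos : 0 < ε := lt_min hε1pos (by linarith)
  have hεδ1 : ε < δ1 := lt_of_le_of_lt (min_le_right _ _) (by linarith)
  have hεε1 : ε ≤ ε1 := min_le_left _ _
  -- off-window compact set and its minimum
  set Kc : Set ℝ := Icc (0:ℝ) L \ ⋃ z ∈ Zt, Metric.ball z ε with hKcdef
  have hKccomp : IsCompact Kc :=
    isCompact_Icc.diff (isOpen_biUnion fun z _ => Metric.isOpen_ball)
  obtain ⟨m0, hm0pos, hm0⟩ : ∃ m0 > 0, ∀ x ∈ Kc, m0 ≤ |Φ t x| := by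
    by_cases hKne : Kc.Nonempty
    · obtain ⟨x0, hx0K, hx0min⟩ := hKccomp.exists_isMinOn hKne
        (((hslice t ht).mono (fun x hx => hx.1)).abs)
      refine ⟨|Φ t x0|, abs_pos.mpr (fun h0 => ?_), fun x hx => hx0min hx⟩
      have hx0Zt : x0 ∈ Zt := ⟨hx0K.1, h0⟩
      exact hx0K.2 (mem_biUnion hx0Zt (Metric.mem_ball_self hεpos))
    · exact ⟨1, one_pos, fun x hx => absurd ⟨x, hx⟩ hKne⟩
  obtain ⟨δ2, hδ2pos, hUC2⟩ : ∃ δ2 > 0, ∀ p ∈ P, ∀ q ∈ P, dist p q < δ2 →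
      |Φ p.1 p.2 - Φ q.1 q.2| < m0 := by
    have := (hPcomp.uniformContinuousOn_of_continuous hΦcont)
    rw [Metric.uniformContinuousOn_iff] at this
    obtain ⟨δ2, hδ2, h⟩ := this m0 hm0pos
    exact ⟨δ2, hδ2, fun p hp q hq hd => by
      have := h p hp q hq hd; rwa [Real.dist_eq] at this⟩
  refine ⟨min δ1 δ2, lt_min hδ1pos hδ2pos, ?_⟩
  intro s hs hdist
  have hd1 : dist s t < δ1 := lt_of_lt_of_le hdist (min_le_left _ _)
  have hd2 : dist s t < δ2 := lt_of_lt_of_le hdist (min_le_right _ _)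
  have htt1 : dist t t < δ1 := by simpa using hδ1pos
  have htt2 : dist t t < δ2 := by simpa using hδ2pos
  -- windows
  set J : ℝ → Set ℝ := fun z => Icc (max 0 (z - ε)) (min L (z + ε)) with hJdef
  have hJIcc : ∀ z, J z ⊆ Icc (0:ℝ) L := fun z x hx =>
    ⟨le_trans (le_max_left _ _) hx.1, le_trans hx.2 (min_le_left _ _)⟩
  have hJnear : ∀ z, ∀ x ∈ J z, |x - z| ≤ ε := by
    intro z x hx
    rw [abs_le]
    constructor
    · have := le_trans (le_max_right 0 (z - ε)) hx.1; linarith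
    · have := le_trans hx.2 (min_le_right L (z + ε)); linarith
  have hZiZt : Zi t ⊆ Zt := fun x hx => ⟨Ioo_subset_Icc_self hx.1, hx.2⟩
  -- derivative estimate on windows
  have hderivsign : ∀ r ∈ Icc (0:ℝ) 1, dist r t < δ1 → ∀ z ∈ Zt, ∀ x ∈ J z,
      |deriv (Φ r) x - deriv (Φ t) z| < c / 2 := by
    intro r hr hdr z hz x hx
    have hxI : x ∈ Icc (0:ℝ) L := hJIcc z hx
    have hdpq : dist ((r, x) : ℝ × ℝ) ((t, z) : ℝ × ℝ) < δ1 := by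
      rw [Prod.dist_eq]
      refine max_lt hdr ?_
      rw [Real.dist_eq]
      exact lt_of_le_of_lt (hJnear z x hx) hεδ1
    exact hUC1 (r, x) ⟨hr, hxI⟩ (t, z) ⟨ht, hZtIcc hz⟩ hdpq
  -- monotonicity on windows
  have hmono : ∀ r ∈ Icc (0:ℝ) 1, dist r t < δ1 → ∀ z ∈ Zt,
      (0 < deriv (Φ t) z → StrictMonoOn (Φ r) (J z)) ∧
      (deriv (Φ t) z < 0 → StrictAntiOn (Φ r) (J z)) := by
    intro r hr hdr z hz
    have hcz : c ≤ |deriv (Φ t) z| := hcmin z hz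
    have hcontr : ContinuousOn (Φ r) (J z) := (hslice r hr).mono (hJIcc z)
    constructor
    · intro hpos
      refine strictMonoOn_of_deriv_pos (convex_Icc _ _) hcontr ?_
      intro x hx
      have hx' : x ∈ J z := interior_subset hx
      have h1 := abs_lt.mp (hderivsign r hr hdr z hz x hx')
      have h2 : |deriv (Φ t) z| = deriv (Φ t) z := abs_of_pos hpos
      rw [h2] at hcz
      linarith [h1.1]
    · intro hneg
      refine strictAntiOn_of_deriv_neg (convex_Icc _ _) hcontr ?_
      intro x hx
      have hx' : x ∈ J z := interior_subset hx
      have h1 := abs_lt.mp (hderivsign r hr hdr z hz x hx')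
      have h2 : |deriv (Φ t) z| = -(deriv (Φ t) z) := abs_of_neg hneg
      rw [h2] at hcz
      linarith [h1.2]
  have hinjJ : ∀ r ∈ Icc (0:ℝ) 1, dist r t < δ1 → ∀ z ∈ Zt, InjOn (Φ r) (J z) := by
    intro r hr hdr z hz
    rcases lt_or_gt_of_ne (hsimp z hz) with hneg | hpos
    · exact ((hmono r hr hdr z hz).2 hneg).injOn
    · exact ((hmono r hr hdr z hz).1 hpos).injOn
  -- zeros lie near Zt
  have hcover : ∀ r ∈ Icc (0:ℝ) 1, dist r t < δ2 → ∀ x ∈ Icc (0:ℝ) L, Φ r x = 0 →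
      ∃ z ∈ Zt, |x - z| < ε := by
    intro r hr hdr x hx h0
    by_contra hcon
    push_neg at hcon
    have hxKc : x ∈ Kc := by
      refine ⟨hx, ?_⟩
      intro hmem
      rw [mem_iUnion₂] at hmem
      obtain ⟨z, hz, hball⟩ := hmem
      rw [Metric.mem_ball, Real.dist_eq] at hball
      exact absurd hball (not_lt.mpr (hcon z hz))
    have h1 : m0 ≤ |Φ t x| := hm0 x hxKc
    have h2 : |Φ r x - Φ t x| < m0 := by
      refine hUC2 (r, x) ⟨hr, hx⟩ (t, x) ⟨ht, hx⟩ ?_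
      rw [Prod.dist_eq]
      exact max_lt hdr (by simpa using hδ2pos)
    rw [h0, zero_sub, abs_neg] at h2
    linarith
  -- interior zeros lie near interior zeros of Φ t
  have hzero_int : ∀ r ∈ Icc (0:ℝ) 1, dist r t < δ1 → dist r t < δ2 →
      ∀ x ∈ Ioo (0:ℝ) L, Φ r x = 0 → ∃ z ∈ Zi t, |x - z| < ε := by
    intro r hr hdr1 hdr2 x hx h0
    obtain ⟨z, hz, hxz⟩ := hcover r hr hdr2 x (Ioo_subset_Icc_self hx) h0
    have hΦr0 : Φ r 0 = 0 := (hsol r hr).2.2.2.1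
    have hΦrL : Φ r L = 0 := (hsol r hr).2.2.2.2
    have habs := abs_lt.mp hxz
    have hz0 : z ≠ 0 := by
      rintro rfl
      have hxJ : x ∈ J 0 := ⟨max_le hx.1.le (by linarith), le_min hx.2.le (by linarith)⟩
      have h0J : (0:ℝ) ∈ J 0 :=
        ⟨max_le le_rfl (by linarith), le_min hL.le (by linarith)⟩
      have heq := hinjJ r hr hdr1 0 h0Zt hxJ h0J (by rw [h0, hΦr0])
      exact absurd heq (ne_of_gt hx.1)
    have hzL : z ≠ L := by
      intro hzeq
      rw [hzeq] at habs
      have hxJ : x ∈ J L :=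
        ⟨max_le hx.1.le (by linarith [habs.1]), le_min hx.2.le (by linarith [habs.2])⟩
      have hLJ : L ∈ J L :=
        ⟨max_le hL.le (by linarith), le_min le_rfl (by linarith)⟩
      have heq := hinjJ r hr hdr1 L hLZt hxJ hLJ (by rw [h0, hΦrL])
      exact absurd heq (ne_of_lt hx.2)
    have hzIoo : z ∈ Ioo (0:ℝ) L :=
      ⟨lt_of_le_of_ne (hZtIcc hz).1 (Ne.symm hz0), lt_of_le_of_ne (hZtIcc hz).2 hzL⟩
    exact ⟨z, ⟨hzIoo, hz.2⟩, hxz⟩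
  -- window geometry for interior zeros of Φ t
  have hwin : ∀ z ∈ Zi t, 2 * ε < z ∧ z + 2 * ε < L := by
    intro z hz
    have hz' : z ∈ Zt := hZiZt hz
    have h1 := hsep z hz' 0 h0Zt (ne_of_gt hz.1.1)
    have h2 := hsep z hz' L hLZt (ne_of_lt hz.1.2)
    rw [sub_zero, abs_of_pos hz.1.1] at h1
    rw [abs_of_neg (by linarith [hz.1.2] : z - L < 0)] at h2
    constructor
    · linarith
    · linarith
  have haKc : ∀ z ∈ Zi t, z - ε ∈ Kc ∧ z + ε ∈ Kc := by
    intro z hz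
    obtain ⟨hw1, hw2⟩ := hwin z hz
    have hmem : ∀ y : ℝ, y ∈ Icc (0:ℝ) L → |y - z| = ε → y ∈ Kc := by
      intro y hyI hyz
      refine ⟨hyI, ?_⟩
      intro hmem
      rw [mem_iUnion₂] at hmem
      obtain ⟨z', hz', hball⟩ := hmem
      rw [Metric.mem_ball, Real.dist_eq] at hball
      rcases eq_or_ne z' z with rfl | hne'
      · rw [hyz] at hball; exact lt_irrefl _ hball
      · have hs1 := hsep z (hZiZt hz) z' hz' (Ne.symm hne')
        have h3 : |z - z'| ≤ |z - y| + |y - z'| := abs_sub_le z y z'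
        rw [abs_sub_comm z y, hyz] at h3
        linarith [hεε1]
    constructor
    · exact hmem _ ⟨by linarith, by linarith⟩ (by rw [abs_of_neg (by linarith : z - ε - z < 0)]; ring)
    · exact hmem _ ⟨by linarith, by linarith⟩ (by rw [abs_of_pos (by linarith : z + ε - z > 0)]; ring)
  -- J z = Icc (z-ε) (z+ε) for interior z
  have hJeq : ∀ z ∈ Zi t, J z = Icc (z - ε) (z + ε) := by
    intro z hz
    obtain ⟨hw1, hw2⟩ := hwin z hz
    show Icc (max 0 (z - ε)) (min L (z + ε)) = _
    rw [max_eq_right (by linarith : (0:ℝ) ≤ z - ε), min_eq_right (by linarith : z + ε ≤ L)]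
  -- sign control of Φ s at window endpoints and existence of a zero
  have hΦclose : ∀ y ∈ Icc (0:ℝ) L, |Φ s y - Φ t y| < m0 := by
    intro y hy
    refine hUC2 (s, y) ⟨hs, hy⟩ (t, y) ⟨ht, hy⟩ ?_
    rw [Prod.dist_eq]
    exact max_lt hd2 (by simpa using hδ2pos)
  have hex : ∀ z ∈ Zi t, ∃ x, x ∈ Ioo (z - ε) (z + ε) ∧ Φ s x = 0 := by
    intro z hz
    obtain ⟨hw1, hw2⟩ := hwin z hz
    obtain ⟨haK, hbK⟩ := haKc z hz
    have haI : z - ε ∈ Icc (0:ℝ) L := haK.1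
    have hbI : z + ε ∈ Icc (0:ℝ) L := hbK.1
    have hma : m0 ≤ |Φ t (z - ε)| := hm0 _ haK
    have hmb : m0 ≤ |Φ t (z + ε)| := hm0 _ hbK
    have haJ : z - ε ∈ J z := by rw [hJeq z hz]; exact ⟨le_rfl, by linarith⟩
    have hbJ : z + ε ∈ J z := by rw [hJeq z hz]; exact ⟨by linarith, le_rfl⟩
    have hzJ : z ∈ J z := by rw [hJeq z hz]; exact ⟨by linarith, by linarith⟩
    have hconts : ContinuousOn (Φ s) (Icc (z - ε) (z + ε)) := by
      refine (hslice s hs).mono ?_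
      rw [← hJeq z hz]; exact hJIcc z
    have hca : |Φ s (z - ε) - Φ t (z - ε)| < m0 := hΦclose _ haI
    have hcb : |Φ s (z + ε) - Φ t (z + ε)| < m0 := hΦclose _ hbI
    have habsa := abs_lt.mp hca
    have habsb := abs_lt.mp hcb
    rcases lt_or_gt_of_ne (hsimp z (hZiZt hz)) with hneg | hpos
    · -- anti case : Φ t (z-ε) > 0 > Φ t (z+ε)
      have hanti := (hmono t ht htt1 z (hZiZt hz)).2 hneg
      have h1 : Φ t (z + ε) < Φ t z := hanti hzJ hbJ (by linarith)
      have h2 : Φ t z < Φ t (z - ε) := hanti haJ hzJ (by linarith)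
      rw [hz.2] at h1 h2
      have ha' : m0 ≤ Φ t (z - ε) := by
        rcases abs_cases (Φ t (z - ε)) with h | h
        · linarith [hma, h.1]
        · linarith [h.2]
      have hb' : Φ t (z + ε) ≤ -m0 := by
        rcases abs_cases (Φ t (z + ε)) with h | h
        · linarith [h.2]
        · linarith [hmb, h.1]
      have hsa : 0 < Φ s (z - ε) := by linarith [habsa.1]
      have hsb : Φ s (z + ε) < 0 := by linarith [habsb.2]
      have := intermediate_value_Ioo' (by linarith : z - ε ≤ z + ε) hconts
        (⟨hsb, hsa⟩ : (0:ℝ) ∈ Ioo (Φ s (z + ε)) (Φ s (z - ε)))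
      obtain ⟨x, hxI, hx0⟩ := this
      exact ⟨x, hxI, hx0⟩
    · -- mono case : Φ t (z-ε) < 0 < Φ t (z+ε)
      have hmon := (hmono t ht htt1 z (hZiZt hz)).1 hpos
      have h1 : Φ t z < Φ t (z + ε) := hmon hzJ hbJ (by linarith)
      have h2 : Φ t (z - ε) < Φ t z := hmon haJ hzJ (by linarith)
      rw [hz.2] at h1 h2
      have ha' : Φ t (z - ε) ≤ -m0 := by
        rcases abs_cases (Φ t (z - ε)) with h | h
        · linarith [h.2]
        · linarith [hma, h.1]
      have hb' : m0 ≤ Φ t (z + ε) := by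
        rcases abs_cases (Φ t (z + ε)) with h | h
        · linarith [hmb, h.1]
        · linarith [h.2]
      have hsa : Φ s (z - ε) < 0 := by linarith [habsa.2]
      have hsb : 0 < Φ s (z + ε) := by linarith [habsb.1]
      have := intermediate_value_Ioo (by linarith : z - ε ≤ z + ε) hconts
        (⟨hsa, hsb⟩ : (0:ℝ) ∈ Ioo (Φ s (z - ε)) (Φ s (z + ε)))
      obtain ⟨x, hxI, hx0⟩ := this
      exact ⟨x, hxI, hx0⟩
  choose! ζ hζ1 hζ2 using hex
  -- ζ is a bijection from Zi t onto Zi s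
  have hmaps : MapsTo ζ (Zi t) (Zi s) := by
    intro z hz
    obtain ⟨hw1, hw2⟩ := hwin z hz
    have h1 := hζ1 z hz
    exact ⟨⟨by linarith [h1.1], by linarith [h1.2]⟩, hζ2 z hz⟩
  have hinj : InjOn ζ (Zi t) := by
    intro z hz z' hz' heq
    by_contra hne'
    have hs1 := hsep z (hZiZt hz) z' (hZiZt hz') hne'
    have h1 := hζ1 z hz
    have h2 := hζ1 z' hz'
    have h3 : |z - z'| ≤ |z - ζ z| + |ζ z - z'| := abs_sub_le z (ζ z) z'
    have h3' : |ζ z - z'| = |ζ z' - z'| := by rw [heq]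
    have h4 : |z - ζ z| < ε := abs_lt.mpr ⟨by linarith [h1.2], by linarith [h1.1]⟩
    have h5 : |ζ z' - z'| < ε := abs_lt.mpr ⟨by linarith [h2.1], by linarith [h2.2]⟩
    linarith [hεε1]
  have hsurj : SurjOn ζ (Zi t) (Zi s) := by
    intro x hx
    obtain ⟨z, hzZi, hxz⟩ := hzero_int s hs hd1 hd2 x hx.1 hx.2
    have habs := abs_lt.mp hxz
    have hxJ : x ∈ J z :=
      ⟨max_le hx.1.1.le (by linarith [habs.1]), le_min hx.1.2.le (by linarith [habs.2])⟩
    have h1 := hζ1 z hzZi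
    have hζIcc : ζ z ∈ Icc (0:ℝ) L := Ioo_subset_Icc_self (hmaps hzZi).1
    have hζJ : ζ z ∈ J z := ⟨max_le hζIcc.1 h1.1.le, le_min hζIcc.2 h1.2.le⟩
    have heq := hinjJ s hs hd1 z (hZiZt hzZi) hxJ hζJ (by rw [hx.2, hζ2 z hzZi])
    exact ⟨z, hzZi, heq.symm⟩
  have himage : ζ '' Zi t = Zi s := Set.BijOn.image_eq ⟨hmaps, hinj, hsurj⟩
  calc (Zi s).ncard = (ζ '' Zi t).ncard := by rw [himage]
    _ = (Zi t).ncard := Set.ncard_image_of_injOn hinj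

/-- invariance of the nodal count along a continuous family of
nonzero stationary states (the mechanism behind Theorem 4.2(1)). -/
theorem stmt_15 (ℏ m lam L g : ℝ) (hℏ : 0 < ℏ) (hm : 0 < m) (hL : 0 < L)
    (β : ℝ → ℝ) (hβ : ContinuousOn β (Set.Icc 0 1))
    (Φ : ℝ → ℝ → ℝ)
    (hΦcont : ContinuousOn (fun p : ℝ × ℝ => Φ p.1 p.2)
      (Set.Icc (0:ℝ) 1 ×ˢ Set.Icc (0:ℝ) L))
    (hΦderiv : ContinuousOn (fun p : ℝ × ℝ => deriv (Φ p.1) p.2)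
      (Set.Icc (0:ℝ) 1 ×ˢ Set.Icc (0:ℝ) L))
    (hsol : ∀ t ∈ Set.Icc (0:ℝ) 1, IsGPSolution ℏ m lam g 0 L (β t) (Φ t))
    (hne : ∀ t ∈ Set.Icc (0:ℝ) 1, ∃ x ∈ Set.Icc (0:ℝ) L, Φ t x ≠ 0) :
    (∀ t ∈ Set.Icc (0:ℝ) 1, {x ∈ Set.Ioo (0:ℝ) L | Φ t x = 0}.Finite) ∧
    {x ∈ Set.Ioo (0:ℝ) L | Φ 0 x = 0}.ncard =
      {x ∈ Set.Ioo (0:ℝ) L | Φ 1 x = 0}.ncard := by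
  have hdslice : ∀ s ∈ Set.Icc (0:ℝ) 1, ContinuousOn (deriv (Φ s)) (Set.Icc 0 L) := by
    intro s hs
    have hc2 : Continuous fun x : ℝ => ((s, x) : ℝ × ℝ) := by fun_prop
    exact hΦderiv.comp hc2.continuousOn (fun x hx => ⟨hs, hx⟩)
  constructor
  · intro t ht
    exact GP_finite hℏ hm hL (hsol t ht) (hdslice t ht) (hne t ht)
  · set n : ↥(Set.Icc (0:ℝ) 1) → ℕ :=
      fun u => {x ∈ Set.Ioo (0:ℝ) L | Φ u.1 x = 0}.ncard with hndef
    have hlc : IsLocallyConstant n := by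
      rw [IsLocallyConstant.iff_eventually_eq]
      intro a
      obtain ⟨δ, hδ, hkey⟩ := GP_local_const ℏ m lam L g hℏ hm hL β Φ
        hΦcont hΦderiv hsol hne a.1 a.2
      have hball : {b : ↥(Set.Icc (0:ℝ) 1) | dist (b : ℝ) (a : ℝ) < δ} ∈ 𝓝 a :=
        continuous_subtype_val.continuousAt.preimage_mem_nhds
          (Metric.ball_mem_nhds _ hδ)
      filter_upwards [hball] with b hb
      exact hkey b.1 b.2 hb
    haveI : PreconnectedSpace ↥(Set.Icc (0:ℝ) 1) :=
      Subtype.preconnectedSpace isPreconnected_Icc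
    have h0m : (0:ℝ) ∈ Set.Icc (0:ℝ) 1 := ⟨le_rfl, zero_le_one⟩
    have h1m : (1:ℝ) ∈ Set.Icc (0:ℝ) 1 := ⟨zero_le_one, le_rfl⟩
    exact hlc.apply_eq_of_preconnectedSpace ⟨0, h0m⟩ ⟨1, h1m⟩
end
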